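/- arXiv:1605.06755 — 8 statements merged into one kernel-verified Lean document; each statement's English description precedes it below -/
import Mathlib

section
/- Two continuous maps f, g : P → Q between finite T₀ spaces are homotopic if and only if there exist m ≥ 0 and a continuous map H : P × J_m → Q with H(·,0) = f and H(·,m) = g, where J_m is the finite fence 0 < 1 > 2 < ⋯ m with the Alexandrov topology. -/
open Set

/-- The finite fence poset `0 < 1 > 2 < ⋯ m` on `m+1` points. -/
def J (m : ℕ) : Type := Fin (m + 1)

namespace J

/-- The underlying natural number of a point of the fence. -/
def val {m : ℕ} (i : J m) : ℕ := @Fin.val (m + 1) i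

instance (m : ℕ) : PartialOrder (J m) where
  le i j := i.val = j.val ∨ (j.val % 2 = 1 ∧ (j.val = i.val + 1 ∨ i.val = j.val + 1))
  le_refl i := Or.inl rfl
  le_trans a b c h₁ h₂ := by
    show a.val = c.val ∨ (c.val % 2 = 1 ∧ (c.val = a.val + 1 ∨ a.val = c.val + 1))
    rcases h₁ with h₁ | h₁ <;> rcases h₂ with h₂ | h₂ <;> omega
  le_antisymm a b h₁ h₂ := by
    have : a.val = b.val := by rcases h₁ with h₁ | h₁ <;> rcases h₂ with h₂ | h₂ <;> omega
    exact @Fin.val_injective (m + 1) a b this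

instance (m : ℕ) : Finite (J m) := inferInstanceAs (Finite (Fin (m + 1)))

/-- The initial point `0` of the fence. -/
def zero {m : ℕ} : J m := (0 : Fin (m + 1))

/-- The terminal point `m` of the fence. -/
def last {m : ℕ} : J m := Fin.last m

end J

/-- The Alexandrov topology on a preordered set: open sets are the lower sets (ideals). -/
def alexTop (α : Type*) [Preorder α] : TopologicalSpace α where
  IsOpen s := IsLowerSet s
  isOpen_univ := isLowerSet_univ
  isOpen_inter _ _ := IsLowerSet.inter
  isOpen_sUnion _ := isLowerSet_sUnion

instance (m : ℕ) : TopologicalSpace (J m) := alexTop (J m)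

/-- `P × P` can be covered by `n` open sets, each admitting a continuous section of
`q_m : P^{J_m} → P × P`, `γ ↦ (γ(0), γ(m))`. -/
def hasCCCover (P : Type*) [TopologicalSpace P] (m n : ℕ) : Prop :=
  ∃ U : Fin n → Set (P × P), (∀ i, IsOpen (U i)) ∧ (⋃ i, U i) = Set.univ ∧
    ∀ i, ∃ s : C(U i, C(J m, P)),
      ∀ x : U i, (s x) J.zero = (x : P × P).1 ∧ (s x) J.last = (x : P × P).2

/-- The combinatorial complexity at length `m`. -/
noncomputable def CCm (P : Type*) [TopologicalSpace P] (m : ℕ) : ℕ∞ :=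
  sInf ((↑) '' {n : ℕ | hasCCCover P m n})

/-- The combinatorial complexity `CC(P) = min_m CC_m(P)`. -/
noncomputable def CC (P : Type*) [TopologicalSpace P] : ℕ∞ := ⨅ m, CCm P m

/-- `X × X` can be covered by `n` open sets, each admitting a continuous section of the
path fibration `X^I → X × X`. -/
def hasTCCover (X : Type*) [TopologicalSpace X] (n : ℕ) : Prop :=
  ∃ U : Fin n → Set (X × X), (∀ i, IsOpen (U i)) ∧ (⋃ i, U i) = Set.univ ∧
    ∀ i, ∃ s : C(U i, C(unitInterval, X)),
      ∀ x : U i, (s x) 0 = (x : X × X).1 ∧ (s x) 1 = (x : X × X).2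

/-- Farber's topological complexity. -/
noncomputable def topComplexity (X : Type*) [TopologicalSpace X] : ℕ∞ :=
  sInf ((↑) '' {n : ℕ | hasTCCover X n})

/-- A subset is contractible in the ambient space when its inclusion is null-homotopic. -/
def ContractibleIn {X : Type*} [TopologicalSpace X] (A : Set X) : Prop :=
  ∃ x₀ : X, ContinuousMap.Homotopic ⟨Subtype.val, continuous_subtype_val⟩
    (ContinuousMap.const A x₀)

/-- The (unreduced) Lusternik–Schnirelmann category. -/
noncomputable def cat (X : Type*) [TopologicalSpace X] : ℕ∞ :=
  sInf ((↑) '' {n : ℕ | ∃ U : Fin n → Set X, (∀ i, IsOpen (U i)) ∧ (⋃ i, U i) = Set.univ ∧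
    ∀ i, ContractibleIn (U i)})

namespace FenceAux3

lemma J_val_le {m : ℕ} (i : J m) : J.val i ≤ m := Nat.lt_succ_iff.mp (@Fin.isLt (m + 1) i)

lemma J_le_def {m : ℕ} (i j : J m) :
    i ≤ j ↔ (J.val i = J.val j ∨
      (J.val j % 2 = 1 ∧ (J.val j = J.val i + 1 ∨ J.val i = J.val j + 1))) :=
  Iff.rfl

/-- The point of `J m` with value `i`. -/
def Jmk {m : ℕ} (i : ℕ) (h : i ≤ m) : J m := (⟨i, by omega⟩ : Fin (m + 1))

lemma Jmk_val {m i : ℕ} (h : i ≤ m) : J.val (Jmk i h) = i := rfl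

lemma J_zero_val {m : ℕ} : J.val (J.zero : J m) = 0 := by
  show (0 : Fin (m + 1)).val = 0
  simp

lemma J_last_val {m : ℕ} : J.val (J.last : J m) = m := rfl

lemma J_isOpen_iff {m : ℕ} (s : Set (J m)) : IsOpen s ↔ IsLowerSet s := Iff.rfl

variable {P Q : Type} [PartialOrder P] [PartialOrder Q]
  [TopologicalSpace P] [TopologicalSpace Q]

lemma continuous_iff_monotone {X : Type*} [PartialOrder X] [TopologicalSpace X]
    (hX : ∀ s : Set X, IsOpen s ↔ IsLowerSet s)
    (hQ : ∀ s : Set Q, IsOpen s ↔ IsLowerSet s) (f : X → Q) :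
    Continuous f ↔ Monotone f := by
  constructor
  · intro hf a b hab
    have h1 : IsOpen (f ⁻¹' Set.Iic (f b)) :=
      hf.isOpen_preimage _ ((hQ _).mpr (isLowerSet_Iic _))
    exact (hX _).mp h1 hab (le_refl (f b))
  · intro hf
    rw [continuous_def]
    intro U hU
    exact (hX _).mpr (((hQ U).mp hU).preimage hf)

lemma prod_isOpen_iff {m : ℕ}
    (hP : ∀ s : Set P, IsOpen s ↔ IsLowerSet s)
    (s : Set (P × J m)) : IsOpen s ↔ IsLowerSet s := by
  constructor
  · intro hs a b hba ha
    rw [isOpen_prod_iff] at hs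
    obtain ⟨u, v, hu, hv, ha1, ha2, huv⟩ := hs a.1 a.2 ha
    have hb1 : b.1 ∈ u := (hP u).mp hu (Prod.le_def.mp hba).1 ha1
    have hb2 : b.2 ∈ v := (J_isOpen_iff v).mp hv (Prod.le_def.mp hba).2 ha2
    exact huv (Set.mk_mem_prod hb1 hb2)
  · intro hs
    have hrw : s = ⋃ x ∈ s, (Set.Iic x.1 ×ˢ Set.Iic x.2) := by
      ext y
      simp only [Set.mem_iUnion, Set.mem_prod, Set.mem_Iic]
      constructor
      · intro hy; exact ⟨y, hy, le_refl y.1, le_refl y.2⟩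
      · rintro ⟨x, hx, h1, h2⟩; exact hs (Prod.le_def.mpr ⟨h1, h2⟩) hx
    rw [hrw]
    exact isOpen_biUnion fun x _ =>
      ((hP _).mpr (isLowerSet_Iic _)).prod ((J_isOpen_iff _).mpr (isLowerSet_Iic _))

/-- The zigzag condition for a fence of maps. -/
def IsFence (m : ℕ) (k : ℕ → C(P, Q)) : Prop :=
  ∀ i, i < m → ((i % 2 = 0 → ∀ p, k i p ≤ k (i + 1) p) ∧
                 (i % 2 = 1 → ∀ p, k (i + 1) p ≤ k i p))

/-- Two maps are fence-related if a zigzag fence of maps joins them. -/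
def FenceRel (f g : C(P, Q)) : Prop :=
  ∃ m k, IsFence m k ∧ k 0 = f ∧ k m = g

lemma FenceRel.refl (f : C(P, Q)) : FenceRel f f :=
  ⟨0, fun _ => f, fun i hi => absurd hi (by omega), rfl, rfl⟩

lemma FenceRel.of_rel {f g : C(P, Q)}
    (h : (∀ p, f p ≤ g p) ∨ (∀ p, g p ≤ f p)) : FenceRel f g := by
  rcases h with h | h
  · refine ⟨1, fun i => if i = 0 then f else g, ?_, by simp, by simp⟩
    intro i hi
    have hi0 : i = 0 := by omega
    subst hi0
    exact ⟨fun _ p => by simpa using h p, fun hc => by omega⟩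
  · refine ⟨2, fun i => if i ≤ 1 then f else g, ?_, by simp, by simp⟩
    intro i hi
    constructor <;> intro hpar p
    · have hi0 : i = 0 := by omega
      subst hi0
      simp
    · have hi1 : i = 1 := by omega
      subst hi1
      simpa using h p

lemma FenceRel.evenize {f g : C(P, Q)} (h : FenceRel f g) :
    ∃ m k, m % 2 = 0 ∧ IsFence m k ∧ k 0 = f ∧ k m = g := by
  obtain ⟨m, k, hk, h0, hm⟩ := h
  by_cases hpar : m % 2 = 0
  · exact ⟨m, k, hpar, hk, h0, hm⟩
  · refine ⟨m + 1, fun i => if i ≤ m then k i else k m, by omega, ?_, ?_, ?_⟩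
    · intro i hi
      constructor <;> intro hip p
      · have him : i < m := by omega
        simp only [if_pos (by omega : i ≤ m), if_pos (by omega : i + 1 ≤ m)]
        exact (hk i him).1 hip p
      · by_cases him : i < m
        · simp only [if_pos (by omega : i ≤ m), if_pos (by omega : i + 1 ≤ m)]
          exact (hk i him).2 hip p
        · have hieq : i = m := by omega
          subst hieq
          simp only [if_pos (le_refl i), if_neg (by omega : ¬ i + 1 ≤ i)]
          exact le_refl _
    · simpa using h0
    · show (if m + 1 ≤ m then k (m + 1) else k m) = g
      rw [if_neg (by omega : ¬ m + 1 ≤ m)]; exact hm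

lemma FenceRel.trans {f g h : C(P, Q)} (h1 : FenceRel f g) (h2 : FenceRel g h) :
    FenceRel f h := by
  obtain ⟨m1, k1, he, hk1, h10, h1m⟩ := h1.evenize
  obtain ⟨m2, k2, hk2, h20, h2m⟩ := h2
  refine ⟨m1 + m2, fun i => if i < m1 then k1 i else k2 (i - m1), ?_, ?_, ?_⟩
  · intro i hi
    by_cases hc1 : i + 1 < m1
    · simp only [if_pos (by omega : i < m1), if_pos hc1]
      exact hk1 i (by omega)
    · by_cases hc2 : i < m1
      · -- i + 1 = m1
        have hieq : i + 1 = m1 := by omega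
        have hval : k2 (i + 1 - m1) = k1 (i + 1) := by
          rw [show i + 1 - m1 = 0 by omega, h20, ← h1m, hieq]
        simp only [if_pos hc2, if_neg hc1, hval]
        exact hk1 i (by omega)
      · -- i ≥ m1
        simp only [if_neg hc2, if_neg hc1]
        have hsub : i + 1 - m1 = (i - m1) + 1 := by omega
        rw [hsub]
        have hpar2 : (i - m1) % 2 = i % 2 := by omega
        have := hk2 (i - m1) (by omega)
        exact ⟨fun hp => this.1 (by omega), fun hp => this.2 (by omega)⟩
  · show (if 0 < m1 then k1 0 else k2 (0 - m1)) = f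
    by_cases h0m : 0 < m1
    · rw [if_pos h0m]; exact h10
    · rw [if_neg h0m]
      have hm10 : m1 = 0 := by omega
      subst hm10
      rw [Nat.zero_sub, h20, ← h1m]
      exact h10
  · show (if m1 + m2 < m1 then k1 (m1 + m2) else k2 (m1 + m2 - m1)) = h
    rw [if_neg (by omega : ¬ m1 + m2 < m1), show m1 + m2 - m1 = m2 by omega]
    exact h2m

lemma homotopic_of_le (hQ : ∀ s : Set Q, IsOpen s ↔ IsLowerSet s)
    (f g : C(P, Q)) (h : ∀ p, f p ≤ g p) : ContinuousMap.Homotopic f g := by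
  have hcont : Continuous fun x : unitInterval × P => if x.1 = 1 then g x.2 else f x.2 := by
    rw [continuous_def]
    intro U hU
    have hUl := (hQ U).mp hU
    have hpre : (fun x : unitInterval × P => if x.1 = 1 then g x.2 else f x.2) ⁻¹' U
        = ({1}ᶜ : Set unitInterval) ×ˢ (f ⁻¹' U) ∪ (Set.univ : Set unitInterval) ×ˢ (g ⁻¹' U) := by
      ext ⟨t, p⟩
      simp only [Set.mem_preimage, Set.mem_union, Set.mem_prod, Set.mem_compl_iff,
        Set.mem_singleton_iff, Set.mem_univ, true_and]
      by_cases ht : t = 1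
      · rw [if_pos ht]
        simp only [ht, not_true_eq_false, false_and, false_or]
      · rw [if_neg ht]
        simp only [ht, not_false_eq_true, true_and]
        exact ⟨Or.inl, fun hc => hc.elim id fun hg => hUl (h p) hg⟩
    rw [hpre]
    exact (isClosed_singleton.isOpen_compl.prod (f.continuous.isOpen_preimage U hU)).union
      (isOpen_univ.prod (g.continuous.isOpen_preimage U hU))
  refine ⟨⟨⟨fun x => if x.1 = 1 then g x.2 else f x.2, hcont⟩, ?_, ?_⟩⟩
  · intro p
    have h01 : (0 : unitInterval) ≠ 1 := by
      intro hc
      have := congrArg Subtype.val hc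
      norm_num at this
    exact if_neg h01
  · intro p
    exact if_pos rfl

lemma fence_homotopic (hQ : ∀ s : Set Q, IsOpen s ↔ IsLowerSet s) :
    ∀ (m : ℕ) (k : ℕ → C(P, Q)), IsFence m k → ContinuousMap.Homotopic (k 0) (k m) := by
  intro m
  induction m with
  | zero => intro k _; exact ContinuousMap.Homotopic.refl _
  | succ n ih =>
    intro k hk
    have h1 : ContinuousMap.Homotopic (k 0) (k n) := ih k (fun i hi => hk i (by omega))
    refine h1.trans ?_
    by_cases hpar : n % 2 = 0
    · exact homotopic_of_le hQ _ _ ((hk n (by omega)).1 hpar)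
    · exact (homotopic_of_le hQ _ _ ((hk n (by omega)).2 (by omega))).symm

lemma fenceRel_of_homotopic [Finite P]
    (hQ : ∀ s : Set Q, IsOpen s ↔ IsLowerSet s)
    (f g : C(P, Q)) (hfg : ContinuousMap.Homotopic f g) : FenceRel f g := by
  obtain ⟨F⟩ := hfg
  have hcP : ∀ t : unitInterval, Continuous fun p : P => F (t, p) := fun t =>
    F.continuous.comp (continuous_const.prodMk continuous_id)
  set Ft : unitInterval → C(P, Q) := fun t => ⟨fun p => F (t, p), hcP t⟩ with hFt
  have key : ∀ t₀ : unitInterval, ∃ V : Set unitInterval,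
      IsOpen V ∧ t₀ ∈ V ∧ ∀ t ∈ V, ∀ p, F (t, p) ≤ F (t₀, p) := by
    intro t₀
    have hct : ∀ p : P, Continuous fun t : unitInterval => F (t, p) := fun p =>
      F.continuous.comp (continuous_id.prodMk continuous_const)
    refine ⟨⋂ p : P, (fun t => F (t, p)) ⁻¹' Set.Iic (F (t₀, p)), ?_, ?_, ?_⟩
    · exact isOpen_iInter_of_finite fun p =>
        (hct p).isOpen_preimage _ ((hQ _).mpr (isLowerSet_Iic _))
    · exact Set.mem_iInter.mpr fun p => le_refl _
    · intro t ht p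
      exact Set.mem_iInter.mp ht p
  set S : Set unitInterval := {t | FenceRel f (Ft t)} with hS
  have hSopen : IsOpen S := by
    rw [isOpen_iff_forall_mem_open]
    intro t ht
    obtain ⟨V, hVo, htV, hV⟩ := key t
    refine ⟨V, ?_, hVo, htV⟩
    intro s hs
    exact ht.trans (FenceRel.of_rel (Or.inr fun p => hV s hs p))
  have hScopen : IsOpen Sᶜ := by
    rw [isOpen_iff_forall_mem_open]
    intro t ht
    obtain ⟨V, hVo, htV, hV⟩ := key t
    refine ⟨V, ?_, hVo, htV⟩
    intro s hs hsS
    exact ht (hsS.trans (FenceRel.of_rel (Or.inl fun p => hV s hs p)))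
  have h0 : (0 : unitInterval) ∈ S := by
    have hFt0 : Ft 0 = f := ContinuousMap.ext fun p => F.apply_zero p
    show FenceRel f (Ft 0)
    rw [hFt0]
    exact FenceRel.refl f
  have hSuniv : S = Set.univ :=
    IsClopen.eq_univ ⟨isOpen_compl_iff.mp hScopen, hSopen⟩ ⟨0, h0⟩
  have h1 : (1 : unitInterval) ∈ S := hSuniv ▸ Set.mem_univ _
  have hFt1 : Ft 1 = g := ContinuousMap.ext fun p => F.apply_one p
  rw [show g = Ft 1 from hFt1.symm]
  exact h1

end FenceAux3

open FenceAux3 in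
/-- Two continuous maps `f g : P → Q` between finite spaces are homotopic iff
there are `m ≥ 0` and a continuous `H : P × J_m → Q` with `H(·,0) = f` and `H(·,m) = g`. -/
theorem homotopic_iff_fence_homotopy
    (P Q : Type) [PartialOrder P] [PartialOrder Q] [Finite P] [Finite Q]
    [TopologicalSpace P] [TopologicalSpace Q]
    (hP : ∀ s : Set P, IsOpen s ↔ IsLowerSet s)
    (hQ : ∀ s : Set Q, IsOpen s ↔ IsLowerSet s)
    (f g : C(P, Q)) :
    ContinuousMap.Homotopic f g ↔
      ∃ (m : ℕ) (H : C(P × J m, Q)),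
        (∀ p : P, H (p, J.zero) = f p) ∧ (∀ p : P, H (p, J.last) = g p) := by
  constructor
  · intro hfg
    obtain ⟨m, k, hk, h0, hm⟩ := fenceRel_of_homotopic hQ f g hfg
    have hkm : ∀ n, Monotone (k n) := fun n =>
      (continuous_iff_monotone hP hQ _).mp (k n).continuous
    refine ⟨m, ⟨fun x => k (J.val x.2) x.1, ?_⟩, ?_, ?_⟩
    · rw [continuous_iff_monotone (prod_isOpen_iff hP) hQ]
      rintro ⟨p, j⟩ ⟨p', j'⟩ hle
      obtain ⟨hp, hj⟩ := Prod.le_def.mp hle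
      have step : k (J.val j) p ≤ k (J.val j') p := by
        rcases (J_le_def j j').mp hj with heq | ⟨hodd, heq | heq⟩
        · rw [heq]
        · have h1 : J.val j < m := by have := J_val_le j'; omega
          rw [heq]
          exact (hk (J.val j) h1).1 (by omega) p
        · have h1 : J.val j' < m := by have := J_val_le j; omega
          rw [heq]
          exact (hk (J.val j') h1).2 hodd p
      exact step.trans (hkm _ hp)
    · intro p
      show k (J.val (J.zero : J m)) p = f p
      rw [J_zero_val, h0]
    · intro p
      show k (J.val (J.last : J m)) p = g p
      rw [J_last_val, hm]
  · rintro ⟨m, H, h0, hm⟩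
    have hmono : Monotone H :=
      (continuous_iff_monotone (prod_isOpen_iff hP) hQ H).mp H.continuous
    set k : ℕ → C(P, Q) := fun i =>
      H.comp ⟨fun p => (p, Jmk (min i m) (min_le_right i m)),
        continuous_id.prodMk continuous_const⟩ with hkdef
    have hfence : IsFence m k := by
      intro i hi
      constructor <;> intro hpar p
      · show H (p, Jmk (min i m) _) ≤ H (p, Jmk (min (i + 1) m) _)
        refine hmono (Prod.le_def.mpr ⟨le_refl p, ?_⟩)
        rw [J_le_def, Jmk_val, Jmk_val]
        omega
      · show H (p, Jmk (min (i + 1) m) _) ≤ H (p, Jmk (min i m) _)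
        refine hmono (Prod.le_def.mpr ⟨le_refl p, ?_⟩)
        rw [J_le_def, Jmk_val, Jmk_val]
        omega
    have hk0 : k 0 = f := by
      ext p
      show H (p, Jmk (min 0 m) (min_le_right 0 m)) = f p
      have hpt : Jmk (min 0 m) (min_le_right 0 m) = (J.zero : J m) :=
        @Fin.val_injective (m + 1) _ _ (by show min 0 m = (0 : Fin (m + 1)).val; simp)
      rw [hpt]
      exact h0 p
    have hkm : k m = g := by
      ext p
      show H (p, Jmk (min m m) (min_le_right m m)) = g p
      have hpt : Jmk (min m m) (min_le_right m m) = (J.last : J m) :=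
        @Fin.val_injective (m + 1) _ _ (by show min m m = (Fin.last m).val; simp)
      rw [hpt]
      exact hm p
    have := fence_homotopic hQ m k hfence
    rwa [hk0, hkm] at this
end

section
/- For a path connected finite T₀ space P there exists m ≥ 0 such that CC_m(P) ≤ cat(P × P), where cat denotes the (unreduced) Lusternik–Schnirelmann category. -/
open Set

namespace CCProof

@[simp] lemma J_zero_val {m : ℕ} : (J.zero : J m).val = 0 := rfl
@[simp] lemma J_last_val {m : ℕ} : (J.last : J m).val = m := rfl

def Jmk {m : ℕ} (k : ℕ) (h : k < m + 1) : J m := (⟨k, h⟩ : Fin (m + 1))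
@[simp] lemma Jmk_val {m k : ℕ} {h : k < m + 1} : (Jmk (m := m) k h).val = k := rfl
lemma J_ext {m : ℕ} {i j : J m} (h : i.val = j.val) : i = j := @Fin.val_injective (m + 1) i j h
lemma J_le_def {m : ℕ} {i j : J m} : i ≤ j ↔ (J.val i = J.val j ∨
    (J.val j % 2 = 1 ∧ (J.val j = J.val i + 1 ∨ J.val i = J.val j + 1))) := Iff.rfl
lemma J_val_lt {m : ℕ} (j : J m) : J.val j < m + 1 := (show Fin (m+1) from j).isLt

lemma isOpen_J {m : ℕ} {s : Set (J m)} (h : IsLowerSet s) : IsOpen s := h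
lemma isLowerSet_of_isOpen_J {m : ℕ} {s : Set (J m)} (h : IsOpen s) : IsLowerSet s := h

variable {P : Type} [PartialOrder P] [TopologicalSpace P]

lemma mono_cont (hP : ∀ s : Set P, IsOpen s ↔ IsLowerSet s) {m : ℕ} {γ : J m → P}
    (h : Monotone γ) : Continuous γ := by
  rw [continuous_def]
  intro O hO
  exact isOpen_J (((hP O).mp hO).preimage h)

lemma cont_mono (hP : ∀ s : Set P, IsOpen s ↔ IsLowerSet s) {m : ℕ} {γ : J m → P}
    (h : Continuous γ) : Monotone γ := by
  intro i j hij
  have hO : IsOpen (γ ⁻¹' Set.Iic (γ j)) := h.isOpen_preimage _ ((hP _).mpr (isLowerSet_Iic _))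
  exact isLowerSet_of_isOpen_J hO hij (le_refl (γ j))

lemma contOfEval {A X Y : Type*} [TopologicalSpace A] [TopologicalSpace X] [Finite X]
    [TopologicalSpace Y] {γ : A → C(X, Y)} (h : ∀ x, Continuous fun a => γ a x) :
    Continuous γ := by
  rw [ContinuousMap.continuous_compactOpen]
  intro K _ U hU
  have : {x | Set.MapsTo (γ x) K U} = ⋂ j ∈ K, {a | γ a j ∈ U} := by
    ext a; simp [Set.MapsTo]
  rw [this]
  exact (Set.toFinite K).isOpen_biInter fun j _ => (hU.preimage (h j))

variable {P : Type} [PartialOrder P] [TopologicalSpace P]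
variable {A : Type} [TopologicalSpace A]

/-- A zigzag section datum from `f` to `g`. -/
def SectTo (A : Type) [TopologicalSpace A] (f g : A → P) : Prop :=
  ∃ m : ℕ, Even m ∧ ∃ s : C(A, C(J m, P)), ∀ a, s a J.zero = f a ∧ s a J.last = g a

/-- Build a continuous family of monotone maps. -/
def buildSect (hP : ∀ s : Set P, IsOpen s ↔ IsLowerSet s) {m : ℕ} (γ : A → J m → P)
    (hmono : ∀ a, Monotone (γ a)) (hev : ∀ j, Continuous fun a => γ a j) :
    C(A, C(J m, P)) :=
  ⟨fun a => ⟨γ a, mono_cont hP (hmono a)⟩, contOfEval (by exact hev)⟩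

@[simp] lemma buildSect_apply (hP : ∀ s : Set P, IsOpen s ↔ IsLowerSet s) {m : ℕ}
    (γ : A → J m → P) (hmono) (hev) (a : A) (j : J m) :
    buildSect hP γ hmono hev a j = γ a j := rfl

lemma sect_const (hP : ∀ s : Set P, IsOpen s ↔ IsLowerSet s) (z : P) :
    SectTo (P := P) A (fun _ => z) (fun _ => z) := by
  refine ⟨0, ⟨0, rfl⟩, buildSect hP (fun _ _ => z) (fun a => monotone_const)
    (fun j => continuous_const), fun a => ⟨rfl, rfl⟩⟩

lemma sect_prepend_core (hP : ∀ s : Set P, IsOpen s ↔ IsLowerSet s) {f t : A → P}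
    (hf : Continuous f) (ht : Continuous t) {m : ℕ} (s : C(A, C(J m, P)))
    (h1 : ∀ a, f a ≤ t a) (h2 : ∀ a, s a J.zero ≤ t a) :
    ∃ s' : C(A, C(J (m + 2), P)), ∀ a,
      s' a J.zero = f a ∧ s' a J.last = s a J.last := by
  set γ : A → J (m + 2) → P := fun a j =>
    if j.val = 0 then f a
    else if j.val = 1 then t a
    else s a (Jmk (J.val j - 2) (by have := J_val_lt j; omega)) with hγ
  have hmono : ∀ a, Monotone (γ a) := by
    intro a i j hij
    rcases J_le_def.mp hij with heq | ⟨hodd, hadj⟩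
    · rw [J_ext heq]
    · have hjlt := J_val_lt j
      have hilt := J_val_lt i
      by_cases hj1 : J.val j = 1
      · -- target is t a
        have : γ a j = t a := by simp [hγ, hj1]
        rw [this]
        rcases hadj with h | h
        · -- i.val = 0
          have hi0 : J.val i = 0 := by omega
          have : γ a i = f a := by simp [hγ, hi0]
          rw [this]; exact h1 a
        · -- i.val = 2
          have hi2 : J.val i = 2 := by omega
          have : γ a i = s a J.zero := by
            simp only [hγ]
            rw [if_neg (by omega), if_neg (by omega)]
            congr 1
            exact J_ext (by simp [hi2])
          rw [this]; exact h2 a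
      · -- j.val ≥ 3, both ≥ 2
        have hj3 : 3 ≤ J.val j := by omega
        have hi2 : 2 ≤ J.val i := by omega
        have hgj : γ a j = s a (Jmk (J.val j - 2) (by omega)) := by
          simp only [hγ]; rw [if_neg (by omega), if_neg (by omega)]
        have hgi : γ a i = s a (Jmk (J.val i - 2) (by omega)) := by
          simp only [hγ]; rw [if_neg (by omega), if_neg (by omega)]
        rw [hgi, hgj]
        refine cont_mono hP (s a).continuous ?_
        rw [J_le_def]
        exact Or.inr (by simp only [Jmk_val]; omega)
  have hev : ∀ j, Continuous fun a => γ a j := by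
    intro j
    by_cases hj0 : J.val j = 0
    · simpa [hγ, hj0] using hf
    · by_cases hj1 : J.val j = 1
      · simp only [hγ, hj1]
        simpa [hj0] using ht
      · have : (fun a => γ a j) = fun a =>
            s a (Jmk (J.val j - 2) (by have := J_val_lt j; omega)) := by
          funext a; simp only [hγ]; rw [if_neg hj0, if_neg hj1]
        rw [this]
        exact (continuous_eval_const _).comp s.continuous
  refine ⟨buildSect hP γ hmono hev, fun a => ⟨?_, ?_⟩⟩
  · simp [hγ]
  · have h0 : J.val (J.last : J (m + 2)) = m + 2 := rfl
    simp only [buildSect_apply, hγ, h0]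
    rw [if_neg (by omega), if_neg (by omega)]
    exact congrArg (s a) (J_ext (by show m + 2 - 2 = m; omega))

open Relation in
lemma reflTransGen_of_nhds {X : Type*} [TopologicalSpace X] [ConnectedSpace X]
    {R : X → X → Prop} (hsymm : ∀ x y, R x y → R y x)
    (hnb : ∀ x, ∃ N ∈ nhds x, ∀ y ∈ N, R y x) (x y : X) :
    Relation.ReflTransGen R x y := by
  set S := {z | Relation.ReflTransGen R x z} with hS
  have hopen : IsOpen S := by
    rw [isOpen_iff_mem_nhds]
    intro z hz
    obtain ⟨N, hN, hR⟩ := hnb z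
    exact Filter.mem_of_superset hN fun w hw => hz.tail (hsymm w z (hR w hw))
  have hclosed : IsClosed S := by
    rw [← isOpen_compl_iff, isOpen_iff_mem_nhds]
    intro z hz
    obtain ⟨N, hN, hR⟩ := hnb z
    refine Filter.mem_of_superset hN fun w hw hwS => hz ?_
    exact hwS.tail (hR w hw)
  have : S = Set.univ := IsClopen.eq_univ ⟨hclosed, hopen⟩ ⟨x, Relation.ReflTransGen.refl⟩
  have hy : y ∈ S := this ▸ Set.mem_univ y
  exact hy

/-- Any two points of a path connected finite space are connected by a comparability chain. -/
lemma reflTransGen_comp (hP : ∀ s : Set P, IsOpen s ↔ IsLowerSet s) [ConnectedSpace P]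
    (z w : P) : Relation.ReflTransGen (fun y z : P => y ≤ z ∨ z ≤ y) z w := by
  refine reflTransGen_of_nhds (fun x y h => h.symm) (fun x => ?_) z w
  refine ⟨Set.Iic x, ((hP _).mpr (isLowerSet_Iic x)).mem_nhds (le_refl x), fun y hy => Or.inl hy⟩

/-- The local comparability lemma for homotopies into `P`. -/
lemma homotopy_nhds {A : Type} [TopologicalSpace A] [Finite A]
    (hP : ∀ s : Set P, IsOpen s ↔ IsLowerSet s)
    (K : C(unitInterval × A, P)) (t : unitInterval) :
    ∃ N ∈ nhds t, ∀ u ∈ N, ∀ a, K (u, a) ≤ K (t, a) := by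
  have h : ∀ a : A, ∃ N ∈ nhds t, ∀ u ∈ N, K (u, a) ≤ K (t, a) := by
    intro a
    have hc : Continuous fun u : unitInterval => K (u, a) :=
      K.continuous.comp (continuous_id.prodMk continuous_const)
    have hO : IsOpen (Set.Iic (K (t, a))) := (hP _).mpr (isLowerSet_Iic _)
    exact ⟨_, hc.continuousAt.preimage_mem_nhds (hO.mem_nhds (le_refl _)),
      fun u hu => hu⟩
  choose N hN hNle using h
  exact ⟨⋂ a, N a, Filter.iInter_mem.mpr hN,
    fun u hu a => hNle a u (Set.mem_iInter.mp hu a)⟩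
lemma sect_prepend (hP : ∀ s : Set P, IsOpen s ↔ IsLowerSet s) {f f' g : A → P}
    (hf : Continuous f) (hf' : Continuous f')
    (hcmp : (∀ a, f a ≤ f' a) ∨ (∀ a, f' a ≤ f a)) (h : SectTo A f' g) :
    SectTo (P := P) A f g := by
  obtain ⟨m, hm, s, hs⟩ := h
  have h0 : ∀ a, s a J.zero = f' a := fun a => (hs a).1
  rcases hcmp with hc | hc
  · obtain ⟨s', hs'⟩ := sect_prepend_core hP hf hf' s
      (fun a => hc a) (fun a => le_of_eq (h0 a))
    exact ⟨m + 2, by rcases hm with ⟨k, hk⟩; exact ⟨k + 1, by omega⟩,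
      s', fun a => ⟨(hs' a).1, ((hs' a).2).trans (hs a).2⟩⟩
  · obtain ⟨s', hs'⟩ := sect_prepend_core hP hf hf s
      (le_refl <| f ·) (fun a => (h0 a) ▸ hc a)
    exact ⟨m + 2, by rcases hm with ⟨k, hk⟩; exact ⟨k + 1, by omega⟩,
      s', fun a => ⟨(hs' a).1, ((hs' a).2).trans (hs a).2⟩⟩

lemma sect_reverse (hP : ∀ s : Set P, IsOpen s ↔ IsLowerSet s) {f g : A → P}
    (h : SectTo A f g) : SectTo (P := P) A g f := by
  obtain ⟨m, hm, s, hs⟩ := h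
  obtain ⟨k, hk⟩ := hm
  have hm2 : m % 2 = 0 := by omega
  set ρ : J m → J m := fun j => Jmk (m - J.val j) (by omega) with hρ
  have hρmono : Monotone ρ := by
    intro i j hij
    have hi := J_val_lt i; have hj := J_val_lt j
    rcases J_le_def.mp hij with heq | ⟨hodd, hadj⟩
    · rw [J_ext heq]
    · rw [J_le_def]
      simp only [hρ, Jmk_val]
      omega
  set γ : A → J m → P := fun a j => s a (ρ j) with hγ
  refine ⟨m, ⟨k, hk⟩, buildSect hP γ
    (fun a => (cont_mono hP (s a).continuous).comp hρmono)
    (fun j => (continuous_eval_const _).comp s.continuous),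
    fun a => ⟨?_, ?_⟩⟩
  · have : ρ J.zero = J.last := J_ext (by simp [hρ])
    simp only [buildSect_apply, hγ, this]
    exact (hs a).2
  · have : ρ J.last = J.zero := J_ext (by simp [hρ])
    simp only [buildSect_apply, hγ, this]
    exact (hs a).1

lemma sect_append (hP : ∀ s : Set P, IsOpen s ↔ IsLowerSet s) {f g g' : A → P}
    (hg : Continuous g) (hg' : Continuous g')
    (hcmp : (∀ a, g a ≤ g' a) ∨ (∀ a, g' a ≤ g a)) (h : SectTo A f g') :
    SectTo (P := P) A f g :=
  sect_reverse hP (sect_prepend hP hg hg' hcmp (sect_reverse hP h))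

lemma sect_pad (hP : ∀ s : Set P, IsOpen s ↔ IsLowerSet s) {m m' : ℕ} (hmm : m ≤ m')
    (s : C(A, C(J m, P))) :
    ∃ s' : C(A, C(J m', P)), ∀ a,
      s' a J.zero = s a J.zero ∧ s' a J.last = s a J.last := by
  set τ : J m' → J m := fun j => Jmk (min (J.val j) m) (by omega) with hτ
  have hτmono : Monotone τ := by
    intro i j hij
    rcases J_le_def.mp hij with heq | ⟨hodd, hadj⟩
    · rw [J_ext heq]
    · rw [J_le_def]
      simp only [hτ, Jmk_val]
      omega
  refine ⟨buildSect hP (fun a j => s a (τ j))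
    (fun a => (cont_mono hP (s a).continuous).comp hτmono)
    (fun j => (continuous_eval_const _).comp s.continuous),
    fun a => ⟨?_, ?_⟩⟩
  · have : τ J.zero = J.zero := J_ext (by simp [hτ])
    simp only [buildSect_apply, this]
  · have : τ J.last = J.last := J_ext (by simp [hτ, Nat.min_eq_right hmm])
    simp only [buildSect_apply, this]


lemma sect_of_chain (hP : ∀ s : Set P, IsOpen s ↔ IsLowerSet s) {y w : P}
    (h : Relation.ReflTransGen (fun a b : P => a ≤ b ∨ b ≤ a) y w) :
    SectTo (P := P) A (fun _ => y) (fun _ => w) := by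
  induction h using Relation.ReflTransGen.head_induction_on with
  | refl => exact sect_const hP w
  | head h₁ h₂ ih =>
      exact sect_prepend hP continuous_const continuous_const
        (h₁.imp (fun h a => h) (fun h a => h)) ih

open Relation in
lemma exists_sect_of_contractibleIn (hP : ∀ s : Set P, IsOpen s ↔ IsLowerSet s)
    [Finite P] [ConnectedSpace P] {U : Set (P × P)} (hU : ContractibleIn U) :
    ∃ m : ℕ, ∃ s : C(U, C(J m, P)),
      ∀ x : U, s x J.zero = (x : P × P).1 ∧ s x J.last = (x : P × P).2 := by
  obtain ⟨z, ⟨H⟩⟩ := hU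
  set A := ↥U
  set K : C(unitInterval × A, P × P) := H.toContinuousMap with hK
  have hc1 : ∀ t : unitInterval, Continuous fun a : A => (K (t, a)).1 := fun t =>
    continuous_fst.comp (K.continuous.comp (continuous_const.prodMk continuous_id))
  have hc2 : ∀ t : unitInterval, Continuous fun a : A => (K (t, a)).2 := fun t =>
    continuous_snd.comp (K.continuous.comp (continuous_const.prodMk continuous_id))
  set R : unitInterval → unitInterval → Prop := fun t t' =>
    (∀ a : A, K (t, a) ≤ K (t', a)) ∨ (∀ a : A, K (t', a) ≤ K (t, a)) with hR
  have hRTG : Relation.ReflTransGen R 0 1 := by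
    refine reflTransGen_of_nhds (fun x y h => h.symm) (fun t => ?_) 0 1
    obtain ⟨N1, hN1, h1⟩ := homotopy_nhds hP ((ContinuousMap.fst).comp K) t
    obtain ⟨N2, hN2, h2⟩ := homotopy_nhds hP ((ContinuousMap.snd).comp K) t
    refine ⟨N1 ∩ N2, Filter.inter_mem hN1 hN2, fun u hu => Or.inl fun a => ?_⟩
    exact Prod.le_def.mpr ⟨h1 u hu.1 a, h2 u hu.2 a⟩
  -- base case : t = 1
  have hbase : SectTo (P := P) A (fun a => (K (1, a)).1) (fun a => (K (1, a)).2) := by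
    have hzz : SectTo (P := P) A (fun _ => z.1) (fun _ => z.2) :=
      sect_of_chain hP (reflTransGen_comp hP z.1 z.2)
    have e1 : (fun a : A => (K (1, a)).1) = fun _ => z.1 := by
      funext a
      rw [show K (1, a) = z from H.apply_one a]
    have e2 : (fun a : A => (K (1, a)).2) = fun _ => z.2 := by
      funext a
      rw [show K (1, a) = z from H.apply_one a]
    rw [e1, e2]
    exact hzz
  -- induct down the chain
  have hmain : SectTo (P := P) A (fun a => (K (0, a)).1) (fun a => (K (0, a)).2) := by
    have : ∀ t : unitInterval, Relation.ReflTransGen R t 1 →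
        SectTo (P := P) A (fun a => (K (t, a)).1) (fun a => (K (t, a)).2) := by
      intro t ht
      induction ht using Relation.ReflTransGen.head_induction_on with
      | refl => exact hbase
      | @head t c h₁ h₂ ih =>
          rcases h₁ with h | h
          · refine sect_append hP (hc2 t) (hc2 c) (Or.inl fun a => (h a).2) ?_
            exact sect_prepend hP (hc1 t) (hc1 c) (Or.inl fun a => (h a).1) ih
          · refine sect_append hP (hc2 t) (hc2 c) (Or.inr fun a => (h a).2) ?_
            exact sect_prepend hP (hc1 t) (hc1 c) (Or.inr fun a => (h a).1) ih
    exact this 0 hRTG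
  obtain ⟨m, _, s, hs⟩ := hmain
  refine ⟨m, s, fun x => ?_⟩
  have h0 : K (0, x) = (x : P × P) := H.apply_zero x
  exact ⟨(hs x).1.trans (congrArg Prod.fst h0), (hs x).2.trans (congrArg Prod.snd h0)⟩

end CCProof

/-- For a path connected finite space `P` there is `m` with
`CC_m(P) ≤ cat(P × P)`. -/
theorem exists_CCm_le_cat
    (P : Type) [PartialOrder P] [Finite P] [TopologicalSpace P] [PathConnectedSpace P]
    (hP : ∀ s : Set P, IsOpen s ↔ IsLowerSet s) :
    ∃ m : ℕ, CCm P m ≤ cat (P × P) := by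
  classical
  by_cases hne : {n : ℕ | ∃ U : Fin n → Set (P × P), (∀ i, IsOpen (U i)) ∧
      (⋃ i, U i) = Set.univ ∧ ∀ i, ContractibleIn (U i)}.Nonempty
  · set S := {n : ℕ | ∃ U : Fin n → Set (P × P), (∀ i, IsOpen (U i)) ∧
      (⋃ i, U i) = Set.univ ∧ ∀ i, ContractibleIn (U i)} with hS
    obtain ⟨U, hUo, hUc, hUct⟩ := Nat.sInf_mem hne
    haveI : ConnectedSpace P := PathConnectedSpace.connectedSpace
    choose mf sf hsf using fun i => CCProof.exists_sect_of_contractibleIn hP (hUct i)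
    refine ⟨Finset.univ.sup mf, le_trans (sInf_le ⟨sInf S, ?_, rfl⟩) (le_sInf ?_)⟩
    · refine ⟨U, hUo, hUc, fun i => ?_⟩
      obtain ⟨s', hs'⟩ := CCProof.sect_pad hP (Finset.le_sup (Finset.mem_univ i)) (sf i)
      exact ⟨s', fun x => ⟨(hs' x).1.trans (hsf i x).1, (hs' x).2.trans (hsf i x).2⟩⟩
    · rintro b ⟨k, hk, rfl⟩
      exact_mod_cast Nat.sInf_le hk
  · refine ⟨0, ?_⟩
    unfold cat
    rw [Set.not_nonempty_iff_eq_empty.mp hne, Set.image_empty, sInf_empty]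
    exact le_top
end

section
/- For any finite T₀ space P, the Lusternik–Schnirelmann category of P is at most the number of maximal elements of P: cat(P) ≤ #Max(P). In particular the prime ideals U_x = {y ≤ x} for x maximal form a contractible open cover of P. -/
open Set

lemma homotopic_of_le' {A P : Type} [TopologicalSpace A] [PartialOrder P] [TopologicalSpace P]
    (hP : ∀ s : Set P, IsOpen s ↔ IsLowerSet s)
    (f g : C(A, P)) (h : ∀ a, f a ≤ g a) : f.Homotopic g := by
  refine ⟨⟨⟨fun p => if p.1 = 1 then g p.2 else f p.2, ?_⟩, ?_, ?_⟩⟩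
  · rw [continuous_def]
    intro U hU
    have hL : IsLowerSet U := (hP U).mp hU
    have : (fun p : unitInterval × A => if p.1 = 1 then g p.2 else f p.2) ⁻¹' U =
        ({t : unitInterval | t ≠ 1} ×ˢ (f ⁻¹' U)) ∪ (univ ×ˢ (g ⁻¹' U)) := by
      ext ⟨t, a⟩
      by_cases ht : t = 1 <;>
        simp [ht, Set.mem_prod]
      exact fun hg => hL (h a) hg
    rw [this]
    exact ((isOpen_ne).prod (f.continuous.isOpen_preimage U hU)).union
      (isOpen_univ.prod (g.continuous.isOpen_preimage U hU))
  · intro a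
    simp [show (0 : unitInterval) ≠ 1 from fun e => by simpa using congrArg Subtype.val e]
  · intro a; simp

/-- For a finite space `P`, `cat(P) ≤ #Max(P)`; in particular the prime ideals
at the maximal points form a contractible open cover of `P`. -/
theorem cat_le_card_max
    (P : Type) [PartialOrder P] [Finite P] [TopologicalSpace P]
    (hP : ∀ s : Set P, IsOpen s ↔ IsLowerSet s) :
    cat P ≤ (Nat.card {x : P // IsMax x} : ℕ∞) ∧
      (⋃ x ∈ {x : P | IsMax x}, Set.Iic x) = Set.univ ∧
      ∀ x : P, IsMax x → IsOpen (Set.Iic x) ∧ ContractibleIn (Set.Iic x) := by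
  have exmax : ∀ p : P, ∃ b : P, p ≤ b ∧ IsMax b := by
    intro p
    obtain ⟨b, hpb, hb⟩ := Finite.exists_le_maximal (p := fun _ : P => True) trivial
    exact ⟨b, hpb, fun y hy => hb.2 trivial hy⟩
  have hopen : ∀ x : P, IsOpen (Set.Iic x) := fun x =>
    (hP _).mpr (fun a b hba ha => le_trans hba ha)
  have hcontr : ∀ x : P, ContractibleIn (Set.Iic x) := by
    intro x
    exact ⟨x, homotopic_of_le' hP ⟨Subtype.val, continuous_subtype_val⟩
      (ContinuousMap.const _ x) (fun a => a.2)⟩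
  have hcover : (⋃ x ∈ {x : P | IsMax x}, Set.Iic x) = Set.univ := by
    ext p
    simp only [Set.mem_iUnion, Set.mem_univ, iff_true, Set.mem_setOf_eq, Set.mem_Iic]
    obtain ⟨b, hpb, hb⟩ := exmax p
    exact ⟨b, hb, hpb⟩
  refine ⟨?_, hcover, fun x hx => ⟨hopen x, hcontr x⟩⟩
  set n := Nat.card {x : P // IsMax x}
  have e := (Finite.equivFin {x : P // IsMax x})
  refine sInf_le ⟨n, ?_, rfl⟩
  refine ⟨fun i => Set.Iic (e.symm i).val, fun i => hopen _, ?_, fun i => hcontr _⟩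
  ext p
  simp only [Set.mem_iUnion, Set.mem_univ, iff_true, Set.mem_Iic]
  obtain ⟨b, hpb, hb⟩ := exmax p
  exact ⟨e ⟨b, hb⟩, by simpa using hpb⟩
end

section
/- For a path connected finite T₀ space P, there exists m ≥ 0 with CC_m(P) ≤ (#Max(P))², where Max(P) is the set of maximal points of P. -/
open Set

set_option linter.unusedSectionVars false
namespace AuxCC

variable {P : Type} [PartialOrder P]

/-- A zigzag chain of length `k` from `y` to `z`. -/
def ChainTo (y z : P) (k : ℕ) : Prop :=
  ∃ g : ℕ → P, g 0 = y ∧ g k = z ∧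
    ∀ i, i < k → (i % 2 = 0 → g i ≤ g (i + 1)) ∧ (i % 2 = 1 → g (i + 1) ≤ g i)

lemma chainTo_self (y : P) : ChainTo y y 0 := ⟨fun _ => y, rfl, rfl, by omega⟩

lemma ChainTo.extend_le {y z z' : P} {k : ℕ} (hk : k % 2 = 0) (h : ChainTo y z k)
    (hz : z' ≤ z) : ChainTo y z' (k + 2) := by
  obtain ⟨g, h0, hk', hstep⟩ := h
  refine ⟨fun i => if i ≤ k then g i else if i = k + 1 then z else z', ?_, ?_, ?_⟩
  · simpa using h0
  · have h1 : ¬ (k + 2 ≤ k) := by omega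
    have h2 : ¬ (k + 2 = k + 1) := by omega
    simp only [if_neg h1, if_neg h2]
  · intro i hi
    rcases lt_trichotomy i k with hik | hik | hik
    · have e1 : i ≤ k := by omega
      have e2 : i + 1 ≤ k := by omega
      simp only [if_pos e1, if_pos e2]
      exact hstep i hik
    · subst hik
      have e2 : ¬ (i + 1 ≤ i) := by omega
      simp only [if_pos le_rfl, if_neg e2, if_pos rfl]
      rw [hk']
      exact ⟨fun _ => le_rfl, fun _ => le_rfl⟩
    · have hik' : i = k + 1 := by omega
      subst hik'
      have e1 : ¬ (k + 1 ≤ k) := by omega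
      have e2 : ¬ (k + 1 + 1 ≤ k) := by omega
      have e3 : ¬ (k + 1 + 1 = k + 1) := by omega
      simp only [if_neg e1, if_pos rfl, if_neg e2, if_neg e3]
      exact ⟨fun h' => by omega, fun _ => hz⟩

lemma ChainTo.extend_ge {y z z' : P} {k : ℕ} (hk : k % 2 = 0) (h : ChainTo y z k)
    (hz : z ≤ z') : ChainTo y z' (k + 2) := by
  obtain ⟨g, h0, hk', hstep⟩ := h
  refine ⟨fun i => if i ≤ k then g i else z', ?_, ?_, ?_⟩
  · simpa using h0
  · have h1 : ¬ (k + 2 ≤ k) := by omega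
    simp only [if_neg h1]
  · intro i hi
    rcases lt_trichotomy i k with hik | hik | hik
    · have e1 : i ≤ k := by omega
      have e2 : i + 1 ≤ k := by omega
      simp only [if_pos e1, if_pos e2]
      exact hstep i hik
    · subst hik
      have e2 : ¬ (i + 1 ≤ i) := by omega
      simp only [if_pos le_rfl, if_neg e2]
      rw [hk']
      exact ⟨fun _ => hz, fun h' => by omega⟩
    · have hik' : i = k + 1 := by omega
      subst hik'
      have e1 : ¬ (k + 1 ≤ k) := by omega
      have e2 : ¬ (k + 1 + 1 ≤ k) := by omega
      simp only [if_neg e1, if_neg e2]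
      exact ⟨fun h' => by omega, fun _ => le_rfl⟩

lemma ChainTo.pad {y z : P} {k : ℕ} (h : ChainTo y z k) (hk : k % 2 = 0) (j : ℕ) :
    ChainTo y z (k + 2 * j) := by
  induction j with
  | zero => simpa using h
  | succ n ih =>
      have : k + 2 * (n + 1) = (k + 2 * n) + 2 := by ring
      rw [this]
      exact ih.extend_le (by omega) le_rfl

lemma exists_chain [Finite P] [TopologicalSpace P] [PreconnectedSpace P]
    (hP : ∀ s : Set P, IsOpen s ↔ IsLowerSet s) (y z : P) :
    ∃ k, k % 2 = 0 ∧ ChainTo y z k := by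
  set S := {w : P | ∃ k, k % 2 = 0 ∧ ChainTo y w k} with hSdef
  have hopen : IsOpen S := by
    rw [hP]
    intro a b hba ha
    obtain ⟨k, hk, hc⟩ := ha
    exact ⟨k + 2, by omega, hc.extend_le hk hba⟩
  have hclosed : IsClosed S := by
    rw [← isOpen_compl_iff, hP]
    intro a b hba ha hb
    obtain ⟨k, hk, hc⟩ := hb
    exact ha ⟨k + 2, by omega, hc.extend_ge hk hba⟩
  have huniv : S = Set.univ :=
    IsClopen.eq_univ ⟨hclosed, hopen⟩ ⟨y, ⟨0, by omega, chainTo_self y⟩⟩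
  have : z ∈ S := by rw [huniv]; trivial
  exact this

/-- The path from `p.1` up to `y = g 0`, along the fence `g`, down to `p.2 ≤ z = g K`. -/
def fencePath (K : ℕ) (g : ℕ → P) (z : P) (p : P × P) (j : ℕ) : P :=
  if j = 0 then p.1 else if j ≤ K + 2 then g (j - 2) else if j = K + 3 then z else p.2

lemma fencePath_zero (K : ℕ) (g : ℕ → P) (z : P) (p : P × P) :
    fencePath K g z p 0 = p.1 := by simp [fencePath]

lemma fencePath_last (K : ℕ) (g : ℕ → P) (z : P) (p : P × P) :
    fencePath K g z p (K + 4) = p.2 := by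
  have h1 : ¬ (K + 4 = 0) := by omega
  have h2 : ¬ (K + 4 ≤ K + 2) := by omega
  have h3 : ¬ (K + 4 = K + 3) := by omega
  simp only [fencePath, if_neg h1, if_neg h2, if_neg h3]

lemma fencePath_mono {K : ℕ} {g : ℕ → P} {z : P} {p q : P × P} (hpq : p ≤ q) (j : ℕ) :
    fencePath K g z p j ≤ fencePath K g z q j := by
  unfold fencePath
  split_ifs
  · exact hpq.1
  · exact le_rfl
  · exact le_rfl
  · exact hpq.2

lemma fencePath_step {K : ℕ} {g : ℕ → P} {z : P} {p : P × P}
    (hK : K % 2 = 0) (hp1 : p.1 ≤ g 0) (hp2 : p.2 ≤ z) (hgK : g K = z)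
    (hstep : ∀ i, i < K → (i % 2 = 0 → g i ≤ g (i + 1)) ∧ (i % 2 = 1 → g (i + 1) ≤ g i)) :
    ∀ i, i < K + 4 →
      (i % 2 = 0 → fencePath K g z p i ≤ fencePath K g z p (i + 1)) ∧
      (i % 2 = 1 → fencePath K g z p (i + 1) ≤ fencePath K g z p i) := by
  intro i hi
  by_cases h0 : i = 0
  · subst h0
    have e1 : ¬ ((0 : ℕ) + 1 = 0) := by omega
    have e2 : (0 : ℕ) + 1 ≤ K + 2 := by omega
    simp only [fencePath, if_pos rfl, if_neg e1, if_pos e2]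
    exact ⟨fun _ => by simpa using hp1, fun h' => by omega⟩
  by_cases h1 : i = 1
  · subst h1
    have e1 : ¬ ((1 : ℕ) = 0) := by omega
    have e2 : (1 : ℕ) ≤ K + 2 := by omega
    have e3 : ¬ ((1 : ℕ) + 1 = 0) := by omega
    have e4 : (1 : ℕ) + 1 ≤ K + 2 := by omega
    simp only [fencePath, if_neg e1, if_pos e2, if_neg e3, if_pos e4]
    have : (1 : ℕ) - 2 = 1 + 1 - 2 := by omega
    rw [this]
    exact ⟨fun h' => by omega, fun _ => le_rfl⟩
  by_cases h2 : i ≤ K + 1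
  · -- 2 ≤ i ≤ K + 1 : interior of the fence
    have e1 : ¬ (i = 0) := h0
    have e2 : i ≤ K + 2 := by omega
    have e3 : ¬ (i + 1 = 0) := by omega
    have e4 : i + 1 ≤ K + 2 := by omega
    simp only [fencePath, if_neg e1, if_pos e2, if_neg e3, if_pos e4]
    have hi2 : i - 2 < K := by omega
    have ha : i + 1 - 2 = (i - 2) + 1 := by omega
    rw [ha]
    obtain ⟨hsa, hsb⟩ := hstep (i - 2) hi2
    exact ⟨fun h' => hsa (by omega), fun h' => hsb (by omega)⟩
  by_cases h3 : i = K + 2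
  · subst h3
    have e1 : ¬ (K + 2 = 0) := by omega
    have e2 : K + 2 ≤ K + 2 := le_rfl
    have e3 : ¬ (K + 2 + 1 = 0) := by omega
    have e4 : ¬ (K + 2 + 1 ≤ K + 2) := by omega
    have e5 : K + 2 + 1 = K + 3 := by omega
    simp only [fencePath, if_neg e1, if_pos e2, if_neg e3, if_neg e4, if_pos e5]
    have : K + 2 - 2 = K := by omega
    rw [this, hgK]
    exact ⟨fun _ => le_rfl, fun h' => by omega⟩
  · have h4 : i = K + 3 := by omega
    subst h4
    have e1 : ¬ (K + 3 = 0) := by omega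
    have e2 : ¬ (K + 3 ≤ K + 2) := by omega
    have e3 : ¬ (K + 3 + 1 = 0) := by omega
    have e4 : ¬ (K + 3 + 1 ≤ K + 2) := by omega
    have e5 : ¬ (K + 3 + 1 = K + 3) := by omega
    simp only [fencePath, if_neg e1, if_neg e2, if_pos rfl, if_neg e3, if_neg e4, if_neg e5]
    exact ⟨fun h' => by omega, fun _ => hp2⟩

lemma fence_mono {m : ℕ} (h : ℕ → P)
    (hstep : ∀ i, i < m → (i % 2 = 0 → h i ≤ h (i + 1)) ∧ (i % 2 = 1 → h (i + 1) ≤ h i)) :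
    ∀ a b : J m, a ≤ b → h (J.val a) ≤ h (J.val b) := by
  intro a b hab
  have hab' : J.val a = J.val b ∨
      (J.val b % 2 = 1 ∧ (J.val b = J.val a + 1 ∨ J.val a = J.val b + 1)) := hab
  have hbm : J.val b < m + 1 := @Fin.isLt (m + 1) b
  have ham : J.val a < m + 1 := @Fin.isLt (m + 1) a
  rcases hab' with hab' | ⟨hodd, hab' | hab'⟩
  · rw [hab']
  · have hlt : J.val a < m := by omega
    have := (hstep (J.val a) hlt).1 (by omega)
    rw [hab']
    exact this
  · have hlt : J.val b < m := by omega
    have := (hstep (J.val b) hlt).2 hodd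
    rw [hab']
    exact this

lemma fence_continuous [TopologicalSpace P] (hP : ∀ s : Set P, IsOpen s ↔ IsLowerSet s)
    {m : ℕ} (h : ℕ → P)
    (hstep : ∀ i, i < m → (i % 2 = 0 → h i ≤ h (i + 1)) ∧ (i % 2 = 1 → h (i + 1) ≤ h i)) :
    Continuous fun j : J m => h (J.val j) := by
  have hmono := fence_mono h hstep
  rw [continuous_def]
  intro V hV
  show IsLowerSet ((fun j : J m => h (J.val j)) ⁻¹' V)
  intro a b hba ha
  exact (hP V).mp hV (hmono b a hba) ha

lemma lowerSet_isOpen_prod [TopologicalSpace P] (hP : ∀ s : Set P, IsOpen s ↔ IsLowerSet s)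
    {L : Set (P × P)} (hL : IsLowerSet L) : IsOpen L := by
  have hrw : L = ⋃ p ∈ L, Set.Iic p.1 ×ˢ Set.Iic p.2 := by
    ext q
    simp only [Set.mem_iUnion, Set.mem_prod, Set.mem_Iic, exists_prop]
    constructor
    · intro hq; exact ⟨q, hq, le_rfl, le_rfl⟩
    · rintro ⟨p, hp, h1, h2⟩
      exact hL (Prod.le_def.mpr ⟨h1, h2⟩) hp
  rw [hrw]
  exact isOpen_biUnion fun p _ =>
    IsOpen.prod ((hP _).mpr (isLowerSet_Iic _)) ((hP _).mpr (isLowerSet_Iic _))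

end AuxCC


/-- For a path connected finite space `P` there is `m` with
`CC_m(P) ≤ (#Max(P))²`. -/
theorem exists_CCm_le_card_max_sq
    (P : Type) [PartialOrder P] [Finite P] [TopologicalSpace P] [PathConnectedSpace P]
    (hP : ∀ s : Set P, IsOpen s ↔ IsLowerSet s) :
    ∃ m : ℕ, CCm P m ≤ (Nat.card {x : P // IsMax x} : ℕ∞) ^ 2 := by
  classical
  have hchain : ∀ p : P × P, ∃ k, k % 2 = 0 ∧ AuxCC.ChainTo p.1 p.2 k :=
    fun p => AuxCC.exists_chain hP p.1 p.2
  choose f hf1 hf2 using hchain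
  haveI : Fintype (P × P) := Fintype.ofFinite _
  set K := 2 * Finset.univ.sup f with hKdef
  have hKmod : K % 2 = 0 := by omega
  have hK : ∀ p : P × P, AuxCC.ChainTo p.1 p.2 K := by
    intro p
    have hle : f p ≤ Finset.univ.sup f := Finset.le_sup (Finset.mem_univ p)
    have hfe := hf1 p
    obtain ⟨j, hj⟩ : ∃ j, K = f p + 2 * j := ⟨(K - f p) / 2, by omega⟩
    rw [hj]
    exact (hf2 p).pad hfe j
  set m := K + 4 with hmdef
  haveI : Fintype {x : P // IsMax x} := Fintype.ofFinite _
  set N := Nat.card {x : P // IsMax x} ^ 2 with hNdef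
  have hcard : Fintype.card ({x : P // IsMax x} × {x : P // IsMax x}) = N := by
    rw [Fintype.card_prod, hNdef, Nat.card_eq_fintype_card, pow_two]
  let e : ({x : P // IsMax x} × {x : P // IsMax x}) ≃ Fin N := Fintype.equivFinOfCardEq hcard
  refine ⟨m, ?_⟩
  have hcover : hasCCCover P m N := by
    refine ⟨fun i => Set.Iic ((e.symm i).1 : P) ×ˢ Set.Iic ((e.symm i).2 : P), ?_, ?_, ?_⟩
    · intro i
      exact IsOpen.prod ((hP _).mpr (isLowerSet_Iic _)) ((hP _).mpr (isLowerSet_Iic _))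
    · apply Set.eq_univ_of_forall
      intro p
      obtain ⟨y, hy, hymax⟩ := Finite.exists_le_maximal (p := fun _ : P => True) (a := p.1) trivial
      obtain ⟨z, hz, hzmax⟩ := Finite.exists_le_maximal (p := fun _ : P => True) (a := p.2) trivial
      refine Set.mem_iUnion.mpr
        ⟨e (⟨y, fun b hb => hymax.2 trivial hb⟩, ⟨z, fun b hb => hzmax.2 trivial hb⟩), ?_⟩
      simp only [Equiv.symm_apply_apply]
      exact ⟨hy, hz⟩
    · intro i
      set y : P := ((e.symm i).1 : P) with hydef
      set z : P := ((e.symm i).2 : P) with hzdef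
      obtain ⟨g, hg0, hgK, hgstep⟩ := hK (y, z)
      set U : Set (P × P) := Set.Iic y ×ˢ Set.Iic z with hUdef
      have hstep' : ∀ x : U, ∀ i', i' < K + 4 →
          (i' % 2 = 0 → AuxCC.fencePath K g z (x : P × P) i' ≤
            AuxCC.fencePath K g z (x : P × P) (i' + 1)) ∧
          (i' % 2 = 1 → AuxCC.fencePath K g z (x : P × P) (i' + 1) ≤
            AuxCC.fencePath K g z (x : P × P) i') := by
        intro x
        exact AuxCC.fencePath_step hKmod (hg0 ▸ x.2.1) x.2.2 hgK hgstep
      have hm4 : m = K + 4 := hmdef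
      let F : U → C(J m, P) := fun x =>
        ⟨fun j => AuxCC.fencePath K g z (x : P × P) (J.val j),
          AuxCC.fence_continuous hP _ (hm4 ▸ hstep' x)⟩
      have hFcont : Continuous F := by
        rw [ContinuousMap.continuous_compactOpen]
        intro Kc hKc V hV
        have hT : IsLowerSet
            {p : P × P | ∀ j ∈ Kc, AuxCC.fencePath K g z p (J.val j) ∈ V} := by
          intro a b hba ha j hj
          exact (hP V).mp hV (AuxCC.fencePath_mono hba (J.val j)) (ha j hj)
        have heq : {x : U | Set.MapsTo (F x) Kc V} =
            Subtype.val ⁻¹' {p : P × P | ∀ j ∈ Kc, AuxCC.fencePath K g z p (J.val j) ∈ V} := rfl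
        rw [heq]
        exact (AuxCC.lowerSet_isOpen_prod hP hT).preimage continuous_subtype_val
      refine ⟨⟨F, hFcont⟩, ?_⟩
      intro x
      constructor
      · show AuxCC.fencePath K g z (x : P × P) (J.val (J.zero (m := m))) = (x : P × P).1
        have : J.val (J.zero (m := m)) = 0 := rfl
        rw [this, AuxCC.fencePath_zero]
      · show AuxCC.fencePath K g z (x : P × P) (J.val (J.last (m := m))) = (x : P × P).2
        have : J.val (J.last (m := m)) = K + 4 := by
          show (Fin.last m).val = K + 4
          rw [Fin.val_last, hm4]
        rw [this, AuxCC.fencePath_last]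
  have hle : CCm P m ≤ (N : ℕ∞) := sInf_le ⟨N, hcover, rfl⟩
  refine hle.trans ?_
  rw [hNdef]
  push_cast
  exact le_rfl
end

section
/- For a path connected finite T₀ space P, TC(P) ≤ CC(P): any open cover of P × P admitting continuous sections of q_m : P^{J_m} → P × P yields, by composing with the map induced by the McCord-type surjection β : [0,1] → J_m, continuous sections of the path fibration p : P^I → P × P on the same open sets. -/
open Set

noncomputable section McCordAux

/-- The integer-valued McCord map `ℝ → ℤ`. -/
def fInt (x : ℝ) : ℤ := ⌊(x + 1) / 2⌋ + ⌈(x - 1) / 2⌉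

lemma fInt_bounds (x : ℝ) : x - 1 < (fInt x : ℝ) ∧ (fInt x : ℝ) < x + 1 := by
  have h1 := Int.floor_le ((x + 1) / 2)
  have h2 := Int.lt_floor_add_one ((x + 1) / 2)
  have h3 := Int.le_ceil ((x - 1) / 2)
  have h4 := Int.ceil_lt_add_one ((x - 1) / 2)
  unfold fInt
  push_cast
  constructor <;> linarith

lemma fInt_of_odd {x : ℝ} (h : Odd (fInt x)) : (fInt x : ℝ) = x := by
  set a := ⌊(x + 1) / 2⌋ with ha
  set b := ⌈(x - 1) / 2⌉ with hb
  have hfl : ⌊(x - 1) / 2⌋ = a - 1 := by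
    rw [show (x - 1) / 2 = (x + 1) / 2 + (-1 : ℤ) by push_cast; ring, Int.floor_add_intCast]
    omega
  have hb1 : b ≤ a := by
    have := Int.ceil_le_floor_add_one ((x - 1) / 2)
    omega
  have hb2 : a - 1 ≤ b := by rw [← hfl, hb]; exact Int.floor_le_ceil _
  have hab : fInt x = a + b := rfl
  have hba : b = a - 1 := by
    rcases h with ⟨c, hc⟩
    omega
  have h1 : (b : ℝ) ≤ (x - 1) / 2 := by
    have h0 := Int.floor_le ((x - 1) / 2)
    rw [hfl] at h0
    rw [hba]
    push_cast at h0 ⊢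
    linarith
  have h2 : (x - 1) / 2 ≤ (b : ℝ) := by rw [hb]; exact Int.le_ceil _
  have hx : x = 2 * (b : ℝ) + 1 := by linarith
  have h3 : fInt x = 2 * b + 1 := by omega
  rw [h3, hx]
  push_cast
  ring

lemma fInt_of_even {k : ℤ} (hk : Even k) {x : ℝ} (h1 : (k : ℝ) - 1 < x)
    (h2 : x < (k : ℝ) + 1) : fInt x = k := by
  obtain ⟨c, hc⟩ := hk
  have hfl : ⌊(x + 1) / 2⌋ = c := by
    rw [Int.floor_eq_iff]
    constructor
    · push_cast; subst hc; push_cast at h1; linarith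
    · push_cast; subst hc; push_cast at h2; linarith
  have hcl : ⌈(x - 1) / 2⌉ = c := by
    rw [Int.ceil_eq_iff]
    constructor
    · push_cast; subst hc; push_cast at h1; linarith
    · push_cast; subst hc; push_cast at h2; linarith
  unfold fInt
  omega

lemma fInt_intCast (n : ℤ) : fInt (n : ℝ) = n := by
  rcases Int.even_or_odd n with h | h
  · exact fInt_of_even h (by linarith) (by linarith)
  · obtain ⟨c, hc⟩ := h
    unfold fInt
    have e1 : ((n : ℝ) + 1) / 2 = ((c + 1 : ℤ) : ℝ) := by subst hc; push_cast; ring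
    have e2 : ((n : ℝ) - 1) / 2 = ((c : ℤ) : ℝ) := by subst hc; push_cast; ring
    rw [e1, e2, Int.floor_intCast, Int.ceil_intCast]
    omega

/-- `βval m t` : the McCord map from the interval to the fence, as a natural number. -/
def βval (m : ℕ) (t : unitInterval) : ℕ := (fInt ((m : ℝ) * (t : ℝ))).toNat

lemma βval_nonneg (m : ℕ) (t : unitInterval) : 0 ≤ fInt ((m : ℝ) * (t : ℝ)) := by
  have hb := (fInt_bounds ((m : ℝ) * (t : ℝ))).1
  have h0 : (0 : ℝ) ≤ (m : ℝ) * (t : ℝ) :=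
    mul_nonneg (Nat.cast_nonneg m) t.2.1
  have h1 : (-1 : ℝ) < (fInt ((m : ℝ) * (t : ℝ)) : ℝ) := by linarith
  have h2 : (-1 : ℤ) < fInt ((m : ℝ) * (t : ℝ)) := by exact_mod_cast h1
  omega

lemma βval_lt (m : ℕ) (t : unitInterval) : βval m t < m + 1 := by
  have hb := (fInt_bounds ((m : ℝ) * (t : ℝ))).2
  have h1 : (m : ℝ) * (t : ℝ) ≤ (m : ℝ) := by
    nlinarith [t.2.2, t.2.1, Nat.cast_nonneg (α := ℝ) m]
  have h2 : (fInt ((m : ℝ) * (t : ℝ)) : ℝ) < (m : ℝ) + 1 := by linarith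
  have h3 : fInt ((m : ℝ) * (t : ℝ)) < (m : ℤ) + 1 := by exact_mod_cast h2
  unfold βval
  omega

/-- The McCord map as a continuous map into the fence. -/
def βc (m : ℕ) : C(unitInterval, J m) where
  toFun t := (⟨βval m t, βval_lt m t⟩ : Fin (m + 1))
  continuous_toFun := by
    constructor
    intro s hs
    have hls : IsLowerSet s := hs
    rw [Metric.isOpen_iff]
    intro t ht
    set x : ℝ := (m : ℝ) * (t : ℝ) with hx
    set k : ℤ := fInt x with hk
    have hk0 : 0 ≤ k := βval_nonneg m t
    rcases Int.even_or_odd k with he | ho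
    · -- even case: locally constant
      have hb := fInt_bounds x
      set ε : ℝ := min (x - ((k : ℝ) - 1)) (((k : ℝ) + 1) - x) with hε
      have hεpos : 0 < ε := by
        apply lt_min <;> [linarith [hb.1]; linarith [hb.2]]
      refine ⟨ε / (m + 1), by positivity, fun t' ht' => ?_⟩
      have hdist : |(t' : ℝ) - (t : ℝ)| < ε / (m + 1) := by
        rw [Metric.mem_ball, Subtype.dist_eq, Real.dist_eq] at ht'
        exact ht'
      set x' : ℝ := (m : ℝ) * (t' : ℝ) with hx'
      have hxx' : |x' - x| < ε := by
        rw [hx', hx, ← mul_sub, abs_mul, abs_of_nonneg (Nat.cast_nonneg (α := ℝ) m)]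
        calc (m : ℝ) * |(t' : ℝ) - (t : ℝ)| ≤ (m + 1) * |(t' : ℝ) - (t : ℝ)| := by
              have := abs_nonneg ((t' : ℝ) - (t : ℝ)); nlinarith
          _ < (m + 1) * (ε / (m + 1)) := by
              apply mul_lt_mul_of_pos_left hdist; positivity
          _ = ε := by field_simp
      have h1 : (k : ℝ) - 1 < x' := by
        have := abs_lt.mp hxx'
        have := min_le_left (x - ((k : ℝ) - 1)) (((k : ℝ) + 1) - x)
        linarith
      have h2 : x' < (k : ℝ) + 1 := by
        have := abs_lt.mp hxx'
        have := min_le_right (x - ((k : ℝ) - 1)) (((k : ℝ) + 1) - x)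
        linarith
      have hfx' : fInt x' = k := fInt_of_even he h1 h2
      have : (⟨βval m t', βval_lt m t'⟩ : Fin (m + 1)) = ⟨βval m t, βval_lt m t⟩ := by
        apply Fin.ext
        show βval m t' = βval m t
        unfold βval
        rw [← hx', ← hx, hfx', ← hk]
      show (⟨βval m t', βval_lt m t'⟩ : Fin (m + 1)) ∈ s
      rw [this]; exact ht
    · -- odd case: x = k, nearby points map below k
      have hxk : (k : ℝ) = x := fInt_of_odd ho
      refine ⟨1 / (m + 1), by positivity, fun t' ht' => ?_⟩
      have hdist : |(t' : ℝ) - (t : ℝ)| < 1 / (m + 1) := by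
        rw [Metric.mem_ball, Subtype.dist_eq, Real.dist_eq] at ht'
        exact ht'
      set x' : ℝ := (m : ℝ) * (t' : ℝ) with hx'
      have hxx' : |x' - x| < 1 := by
        rw [hx', hx, ← mul_sub, abs_mul, abs_of_nonneg (Nat.cast_nonneg (α := ℝ) m)]
        calc (m : ℝ) * |(t' : ℝ) - (t : ℝ)| ≤ (m + 1) * |(t' : ℝ) - (t : ℝ)| := by
              have := abs_nonneg ((t' : ℝ) - (t : ℝ)); nlinarith
          _ < (m + 1) * (1 / (m + 1)) := by
              apply mul_lt_mul_of_pos_left hdist; positivity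
          _ = 1 := by field_simp
      set k' : ℤ := fInt x' with hk'
      have hk'0 : 0 ≤ k' := βval_nonneg m t'
      have hb' := fInt_bounds x'
      have habs := abs_lt.mp hxx'
      have hkk'1 : (k : ℝ) - 2 < (k' : ℝ) := by linarith [hb'.1]
      have hkk'2 : (k' : ℝ) < (k : ℝ) + 2 := by linarith [hb'.2]
      have hZ1 : k - 2 < k' := by exact_mod_cast hkk'1
      have hZ2 : k' < k + 2 := by exact_mod_cast hkk'2
      have hole : k % 2 = 1 := Int.odd_iff.mp ho
      -- show β t' ≤ β t in J m
      have hle : @LE.le (J m) Preorder.toLE (⟨βval m t', βval_lt m t'⟩ : Fin (m+1))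
          (⟨βval m t, βval_lt m t⟩ : Fin (m+1)) := by
        show βval m t' = βval m t ∨
          ((βval m t) % 2 = 1 ∧ (βval m t = βval m t' + 1 ∨ βval m t' = βval m t + 1))
        unfold βval
        rw [← hx', ← hx, ← hk', ← hk]
        omega
      exact hls hle ht

lemma βc_zero (m : ℕ) : βc m (0 : unitInterval) = (J.zero : J m) := by
  apply Fin.ext
  show βval m 0 = (0 : Fin (m+1)).val
  unfold βval
  rw [show ((m : ℝ) * ((0 : unitInterval) : ℝ)) = ((0 : ℤ) : ℝ) by norm_num,
    fInt_intCast]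
  simp

lemma βc_one (m : ℕ) : βc m (1 : unitInterval) = (J.last : J m) := by
  apply Fin.ext
  show βval m 1 = (Fin.last m).val
  unfold βval
  rw [show ((m : ℝ) * ((1 : unitInterval) : ℝ)) = ((m : ℤ) : ℝ) by norm_num,
    fInt_intCast]
  simp [Fin.last]

lemma cc_to_tc (P : Type*) [TopologicalSpace P] (m n : ℕ) (h : hasCCCover P m n) :
    hasTCCover P n := by
  obtain ⟨U, hU, hcov, hsec⟩ := h
  refine ⟨U, hU, hcov, fun i => ?_⟩
  obtain ⟨s, hs⟩ := hsec i
  refine ⟨⟨fun x => (s x).comp (βc m),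
    (ContinuousMap.continuous_precomp (βc m)).comp s.continuous⟩, fun x => ?_⟩
  constructor
  · show (s x) (βc m 0) = (x : P × P).1
    rw [βc_zero]; exact (hs x).1
  · show (s x) (βc m 1) = (x : P × P).2
    rw [βc_one]; exact (hs x).2

end McCordAux

/-- For a path connected finite space `P`, `TC(P) ≤ CC(P)`. -/
theorem TC_le_CC
    (P : Type) [PartialOrder P] [Finite P] [TopologicalSpace P] [PathConnectedSpace P]
    (hP : ∀ s : Set P, IsOpen s ↔ IsLowerSet s) :
    topComplexity P ≤ CC P := by
  rw [CC]
  refine le_iInf fun m => ?_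
  rw [CCm, topComplexity]
  apply sInf_le_sInf
  rintro _ ⟨n, hn, rfl⟩
  exact ⟨n, cc_to_tc P m n hn, rfl⟩
end

section
/- Let R be a finite T₀ space and P, Q fiberwise spaces over R that are themselves finite T₀ spaces. If two fiberwise maps f, g : P → Q over R are fiberwise homotopic, then there exist m ≥ 0 and a continuous map H : P × J_m → Q over R with H(·,0) = f and H(·,m) = g. -/
open Set

/-! ### Auxiliary lemmas for `fiberwise_homotopic_fence` -/

section Aux

open Relation

/-- In a finite space, any two points of a preconnected set are connected by a
specialization zigzag (in the ambient space). -/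
lemma zigzag_of_isPreconnected {X : Type*} [TopologicalSpace X] [Finite X]
    {T : Set X} (hT : IsPreconnected T) {x y : X} (hx : x ∈ T) (hy : y ∈ T) :
    Relation.ReflTransGen (fun a b => a ⤳ b ∨ b ⤳ a) x y := by
  set r : X → X → Prop := fun a b => a ⤳ b ∨ b ⤳ a with hr
  set C : Set X := {z | Relation.ReflTransGen r x z} with hC
  have hmin : ∀ z : X, IsOpen (⋂₀ {U : Set X | IsOpen U ∧ z ∈ U}) :=
    fun z => Set.Finite.isOpen_sInter (Set.toFinite _) (fun U hU => hU.1)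
  have hmem : ∀ z : X, z ∈ ⋂₀ {U : Set X | IsOpen U ∧ z ∈ U} :=
    fun z U hU => hU.2
  have hspec : ∀ z w : X, w ∈ ⋂₀ {U : Set X | IsOpen U ∧ z ∈ U} → w ⤳ z := by
    intro z w hw
    rw [specializes_iff_forall_open]
    intro s hs hzs
    exact hw s ⟨hs, hzs⟩
  have hCopen : IsOpen C := by
    rw [isOpen_iff_forall_mem_open]
    intro z hz
    exact ⟨_, fun w hw => Relation.ReflTransGen.tail hz (Or.inr (hspec z w hw)),
      hmin z, hmem z⟩
  have hCcopen : IsOpen Cᶜ := by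
    rw [isOpen_iff_forall_mem_open]
    intro z hz
    refine ⟨_, fun w hw hwC => hz ?_, hmin z, hmem z⟩
    exact Relation.ReflTransGen.tail hwC (Or.inl (hspec z w hw))
  by_contra hy'
  have hne := hT C Cᶜ hCopen hCcopen (fun w _ => em (w ∈ C))
    ⟨x, hx, Relation.ReflTransGen.refl⟩ ⟨y, hy, hy'⟩
  obtain ⟨z, _, hz1, hz2⟩ := hne
  exact hz2 hz1

/-- Extract a finite chain from a `ReflTransGen`. -/
lemma chain_of_reflTransGen {α : Type*} {r : α → α → Prop} {x y : α}
    (h : Relation.ReflTransGen r x y) :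
    ∃ k, ∃ c : ℕ → α, c 0 = x ∧ c k = y ∧ ∀ i < k, r (c i) (c (i + 1)) := by
  induction h with
  | refl => exact ⟨0, fun _ => x, rfl, rfl, by omega⟩
  | @tail b z hxb hbz ih =>
    obtain ⟨k, c, h0, hk, hrel⟩ := ih
    refine ⟨k + 1, fun i => if i ≤ k then c i else z, by simpa using h0, by simp, ?_⟩
    intro i hi
    rcases Nat.lt_or_ge i k with h' | h'
    · simpa [h'.le, Nat.succ_le_of_lt h'] using hrel i h'
    · have hik : i = k := by omega
      subst hik
      simpa [hk] using hbz

/-- In a T₀/Alexandrov-style topology whose open sets are lower sets, specialization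
implies order. -/
lemma le_of_specializes_lower {Q : Type*} [Preorder Q] [TopologicalSpace Q]
    (hQ : ∀ s : Set Q, IsOpen s ↔ IsLowerSet s) {a b : Q} (h : a ⤳ b) : a ≤ b :=
  (specializes_iff_forall_open.1 h) (Set.Iic b) ((hQ _).2 (isLowerSet_Iic _)) le_rfl

/-- Continuous maps between lower-set topologies are monotone. -/
lemma cmap_monotone {P Q : Type*} [Preorder P] [Preorder Q]
    [TopologicalSpace P] [TopologicalSpace Q]
    (hP : ∀ s : Set P, IsOpen s ↔ IsLowerSet s)
    (hQ : ∀ s : Set Q, IsOpen s ↔ IsLowerSet s)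
    (h : C(P, Q)) {a b : P} (hab : a ≤ b) : h a ≤ h b := by
  have hopen : IsOpen (h ⁻¹' Set.Iic (h b)) :=
    (((hQ _).2 (isLowerSet_Iic _))).preimage h.continuous
  exact (hP _).1 hopen hab (le_rfl : h b ∈ Set.Iic (h b))

/-- A monotone map out of a product of lower-set topologies is continuous. -/
lemma continuous_of_monotone_prod {P J' Q : Type*} [Preorder P] [Preorder J'] [Preorder Q]
    [TopologicalSpace P] [TopologicalSpace J'] [TopologicalSpace Q]
    (hP : ∀ s : Set P, IsOpen s ↔ IsLowerSet s)
    (hJ : ∀ s : Set J', IsOpen s ↔ IsLowerSet s)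
    (hQ : ∀ s : Set Q, IsOpen s ↔ IsLowerSet s)
    (F : P × J' → Q)
    (hm : ∀ p p' t t', p ≤ p' → t ≤ t' → F (p, t) ≤ F (p', t')) : Continuous F := by
  rw [continuous_def]
  intro V hV
  have hVl : IsLowerSet V := (hQ V).1 hV
  have hrepr : F ⁻¹' V = ⋃ z ∈ F ⁻¹' V, (Set.Iic (Prod.fst z)) ×ˢ (Set.Iic (Prod.snd z)) := by
    apply subset_antisymm
    · intro z hz
      exact Set.mem_biUnion hz ⟨le_rfl, le_rfl⟩
    · rintro ⟨p, t⟩ hw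
      simp only [Set.mem_iUnion] at hw
      obtain ⟨⟨p', t'⟩, hz, hpt⟩ := hw
      obtain ⟨hp, ht⟩ := hpt
      exact hVl (hm p p' t t' hp ht) hz
  rw [hrepr]
  exact isOpen_biUnion fun z _ =>
    ((hP _).2 (isLowerSet_Iic _)).prod ((hJ _).2 (isLowerSet_Iic _))

lemma J.le_iff {m : ℕ} {i j : J m} :
    i ≤ j ↔ (i.val = j.val ∨ (j.val % 2 = 1 ∧ (j.val = i.val + 1 ∨ i.val = j.val + 1))) :=
  Iff.rfl

lemma J.isOpen_iff {m : ℕ} (s : Set (J m)) : IsOpen s ↔ IsLowerSet s := Iff.rfl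

lemma J.val_lt {m : ℕ} (t : J m) : J.val t < m + 1 := (show Fin (m + 1) from t).isLt

lemma J.val_zero' {m : ℕ} : (J.zero : J m).val = 0 := rfl

lemma J.val_last' {m : ℕ} : (J.last : J m).val = m := rfl

end Aux

/-- The alternating ("fence-shaped") chain obtained from a chain of pairwise-comparable
maps: even indices are the original maps, odd indices are the larger of the two
neighbours. -/
noncomputable def altChain {P Q : Type*} [TopologicalSpace P] [TopologicalSpace Q] [Preorder Q]
    (c : ℕ → C(P, Q)) (j : ℕ) : C(P, Q) :=
  open Classical in
  if j % 2 = 0 then c (j / 2)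
  else if ∀ p, c (j / 2) p ≤ c (j / 2 + 1) p then c (j / 2 + 1) else c (j / 2)

lemma altChain_even {P Q : Type*} [TopologicalSpace P] [TopologicalSpace Q] [Preorder Q]
    (c : ℕ → C(P, Q)) {j i : ℕ} (hj : j % 2 = 0) (hij : j / 2 = i) :
    altChain c j = c i := by
  subst hij; exact if_pos hj

lemma altChain_odd_pos {P Q : Type*} [TopologicalSpace P] [TopologicalSpace Q] [Preorder Q]
    (c : ℕ → C(P, Q)) {j i : ℕ} (hj : j % 2 = 1) (hij : j / 2 = i)
    (hle : ∀ p, c i p ≤ c (i + 1) p) :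
    altChain c j = c (i + 1) := by
  subst hij; exact (if_neg (by omega)).trans (if_pos hle)

lemma altChain_odd_neg {P Q : Type*} [TopologicalSpace P] [TopologicalSpace Q] [Preorder Q]
    (c : ℕ → C(P, Q)) {j i : ℕ} (hj : j % 2 = 1) (hij : j / 2 = i)
    (hle : ¬ ∀ p, c i p ≤ c (i + 1) p) :
    altChain c j = c i := by
  subst hij; exact (if_neg (by omega)).trans (if_neg hle)

/-- If two fiberwise maps `f g : P → Q` over `R` between finite spaces are
fiberwise homotopic, then they are connected by a fiberwise combinatorial homotopy
`H : P × J_m → Q` over `R`. -/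
theorem fiberwise_homotopic_fence
    (R P Q : Type) [PartialOrder R] [PartialOrder P] [PartialOrder Q]
    [Finite R] [Finite P] [Finite Q]
    [TopologicalSpace R] [TopologicalSpace P] [TopologicalSpace Q]
    (hR : ∀ s : Set R, IsOpen s ↔ IsLowerSet s)
    (hP : ∀ s : Set P, IsOpen s ↔ IsLowerSet s)
    (hQ : ∀ s : Set Q, IsOpen s ↔ IsLowerSet s)
    (πP : C(P, R)) (πQ : C(Q, R)) (f g : C(P, Q))
    (hf : ∀ p : P, πQ (f p) = πP p) (hg : ∀ p : P, πQ (g p) = πP p)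
    (h : ∃ H : C(P × unitInterval, Q),
      (∀ p : P, H (p, 0) = f p) ∧ (∀ p : P, H (p, 1) = g p) ∧
      ∀ (p : P) (t : unitInterval), πQ (H (p, t)) = πP p) :
    ∃ (m : ℕ) (H : C(P × J m, Q)),
      (∀ p : P, H (p, J.zero) = f p) ∧ (∀ p : P, H (p, J.last) = g p) ∧
      ∀ (p : P) (t : J m), πQ (H (p, t)) = πP p := by
  classical
  obtain ⟨H0, hH0f, hH0g, hH0fib⟩ := h
  haveI : Finite C(P, Q) :=
    Finite.of_injective (fun h : C(P, Q) => (h : P → Q)) DFunLike.coe_injective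
  -- the fiberwise mapping space, a finite topological space
  let K : C(unitInterval, C(P, Q)) := (H0.comp ⟨Prod.swap, continuous_swap⟩).curry
  have hK : ∀ (t : unitInterval) (p : P), K t p = H0 (p, t) := fun t p => rfl
  let φ : unitInterval → {h : C(P, Q) // ∀ p, πQ (h p) = πP p} := fun t =>
    ⟨K t, fun p => by rw [hK]; exact hH0fib p t⟩
  have hφ : Continuous φ := K.continuous.subtype_mk _
  have hx0 : φ 0 = ⟨f, hf⟩ := Subtype.ext (ContinuousMap.ext fun p => by
    rw [hK]; exact hH0f p)
  have hx1 : φ 1 = ⟨g, hg⟩ := Subtype.ext (ContinuousMap.ext fun p => by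
    rw [hK]; exact hH0g p)
  have hT : IsPreconnected (Set.range φ) := isPreconnected_range hφ
  have hzig := zigzag_of_isPreconnected hT ⟨0, hx0⟩ ⟨1, hx1⟩
  have key : ∀ a b : {h : C(P, Q) // ∀ p, πQ (h p) = πP p}, a ⤳ b →
      ∀ p, a.1 p ≤ b.1 p := by
    intro a b hab p
    have h1 : a.1 ⤳ b.1 := hab.map continuous_subtype_val
    have h2 : a.1 p ⤳ b.1 p := h1.map (continuous_eval_const p)
    exact le_of_specializes_lower hQ h2
  have hzig2 : Relation.ReflTransGen
      (fun a b : {h : C(P, Q) // ∀ p, πQ (h p) = πP p} =>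
        (∀ p, a.1 p ≤ b.1 p) ∨ (∀ p, b.1 p ≤ a.1 p)) ⟨f, hf⟩ ⟨g, hg⟩ :=
    Relation.ReflTransGen.mono (fun a b (hab : a ⤳ b ∨ b ⤳ a) => hab.imp (key a b) (key b a)) _ _ hzig
  obtain ⟨k, c, hc0, hck, hcr⟩ := chain_of_reflTransGen hzig2
  set c' : ℕ → C(P, Q) := fun i => (c i).1 with hc'
  set d : ℕ → C(P, Q) := altChain c' with hd
  have hd_mono : ∀ j, ∀ {p p' : P}, p ≤ p' → d j p ≤ d j p' := by
    intro j p p' hp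
    rw [hd]
    unfold altChain
    split_ifs <;> exact cmap_monotone hP hQ _ hp
  have hd_fib : ∀ j p, πQ (d j p) = πP p := by
    intro j p
    rw [hd]
    unfold altChain
    split_ifs <;> exact (c _).2 p
  have hmono : ∀ (p p' : P) (t t' : J (2 * k)), p ≤ p' → t ≤ t' →
      d (J.val t) p ≤ d (J.val t') p' := by
    intro p p' t t' hp ht
    rcases J.le_iff.1 ht with hv | ⟨hodd, hv | hv⟩
    · rw [hv]; exact hd_mono _ hp
    · -- `t'.val = t.val + 1` with `t'.val` odd; `t.val` is even
      have ha : J.val t % 2 = 0 := by omega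
      set i := J.val t / 2 with hi
      have h2 : J.val t' / 2 = i := by omega
      have h1 : d (J.val t) = c' i := altChain_even c' ha rfl
      by_cases hle : ∀ q, c' i q ≤ c' (i + 1) q
      · have h4 : d (J.val t') = c' (i + 1) := altChain_odd_pos c' hodd h2 hle
        rw [h1, h4]
        exact le_trans (cmap_monotone hP hQ _ hp) (hle p')
      · have h4 : d (J.val t') = c' i := altChain_odd_neg c' hodd h2 hle
        rw [h1, h4]
        exact cmap_monotone hP hQ _ hp
    · -- `t.val = t'.val + 1` with `t'.val` odd; `t.val` is even
      have ha : J.val t % 2 = 0 := by omega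
      set i := J.val t' / 2 with hi
      have hta : J.val t / 2 = i + 1 := by omega
      have h1 : d (J.val t) = c' (i + 1) := altChain_even c' ha hta
      have hik : i < k := by
        have := J.val_lt t
        omega
      by_cases hle : ∀ q, c' i q ≤ c' (i + 1) q
      · have h4 : d (J.val t') = c' (i + 1) := altChain_odd_pos c' hodd rfl hle
        rw [h1, h4]
        exact cmap_monotone hP hQ _ hp
      · have h4 : d (J.val t') = c' i := altChain_odd_neg c' hodd rfl hle
        rw [h1, h4]
        have hge : ∀ q, c' (i + 1) q ≤ c' i q := (hcr i hik).resolve_left hle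
        exact le_trans (cmap_monotone hP hQ _ hp) (hge p')
  refine ⟨2 * k, ⟨fun z => d (J.val z.2) z.1, ?_⟩, ?_, ?_, ?_⟩
  · exact continuous_of_monotone_prod hP (J.isOpen_iff) hQ _
      (fun p p' t t' hp ht => hmono p p' t t' hp ht)
  · intro p
    show d (J.val (J.zero : J (2 * k))) p = f p
    rw [J.val_zero', hd, altChain_even c' (j := 0) (i := 0) rfl rfl]
    show (c 0).1 p = f p
    rw [hc0]
  · intro p
    show d (J.val (J.last : J (2 * k))) p = g p
    rw [J.val_last', hd, altChain_even c' (j := 2 * k) (i := k) (by omega) (by omega)]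
    show (c k).1 p = g p
    rw [hck]
  · intro p t
    exact hd_fib (J.val t) p
end

section
/- For any path connected finite T₀ space P, CC(P) ≤ cat*_P(P × P), the fiberwise unpointed LS-category of P × P regarded as a fiberwise pointed space over P via the second projection and the diagonal section. -/
open Set

/-- `P × P` is covered by `n` open sets, each fiberwise compressible into the diagonal
section of the fiberwise pointed space `pr₂ : P × P → P`, `Δ : P → P × P`. -/
def hasCatStarCover (P : Type*) [TopologicalSpace P] (n : ℕ) : Prop :=
  ∃ U : Fin n → Set (P × P), (∀ i, IsOpen (U i)) ∧ (⋃ i, U i) = Set.univ ∧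
    ∀ i, ∃ H : C(↥(U i) × unitInterval, P × P),
      (∀ x : U i, H (x, 0) = (x : P × P)) ∧
      (∀ x : U i, (H (x, 1)).1 = (H (x, 1)).2) ∧
      (∀ (x : U i) (t : unitInterval), (H (x, t)).2 = (x : P × P).2)

/-- The fiberwise unpointed LS-category `cat*_P(P × P)` (unreduced version). -/
noncomputable def catStar (P : Type*) [TopologicalSpace P] : ℕ∞ :=
  sInf ((↑) '' {n : ℕ | hasCatStarCover P n})


section AuxForCC

/-- A topology is "Alexandrov-with-given-order" if open sets are exactly lower sets. -/
def IsAlex (X : Type*) [TopologicalSpace X] [Preorder X] : Prop :=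
  ∀ s : Set X, IsOpen s ↔ IsLowerSet s

lemma isAlex_J (m : ℕ) : IsAlex (J m) := fun _ => Iff.rfl

lemma isAlex_prod {X Y : Type*} [TopologicalSpace X] [TopologicalSpace Y]
    [Preorder X] [Preorder Y] (hX : IsAlex X) (hY : IsAlex Y) : IsAlex (X × Y) := by
  intro s
  constructor
  · intro hs p q hqp hp
    obtain ⟨u, v, hu, hv, h1, h2, hsub⟩ := isOpen_prod_iff.mp hs p.1 p.2 hp
    exact hsub ⟨(hX u).mp hu hqp.1 h1, (hY v).mp hv hqp.2 h2⟩
  · intro hs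
    have hrep : s = ⋃ p ∈ s, Iic p.1 ×ˢ Iic p.2 := by
      ext x
      simp only [Set.mem_iUnion, Set.mem_prod, Set.mem_Iic, exists_prop]
      constructor
      · intro hx; exact ⟨x, hx, le_rfl, le_rfl⟩
      · rintro ⟨p, hp, h1, h2⟩; exact hs (Prod.le_def.mpr ⟨h1, h2⟩) hp
    rw [hrep]
    exact isOpen_biUnion fun p _ =>
      IsOpen.prod ((hX _).mpr (isLowerSet_Iic _)) ((hY _).mpr (isLowerSet_Iic _))

lemma isAlex_subtype {X : Type*} [TopologicalSpace X] [Preorder X]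
    (hX : IsAlex X) (S : Set X) : IsAlex S := by
  intro t
  rw [isOpen_induced_iff]
  constructor
  · rintro ⟨u, hu, rfl⟩ a b hba ha
    exact (hX u).mp hu hba ha
  · intro ht
    refine ⟨⋃ y ∈ Subtype.val '' t, Iic y,
      isOpen_biUnion fun y _ => (hX _).mpr (isLowerSet_Iic _), ?_⟩
    ext x
    simp only [Set.mem_preimage, Set.mem_iUnion, Set.mem_Iic, exists_prop, Set.mem_image]
    constructor
    · rintro ⟨y, ⟨z, hz, rfl⟩, hxy⟩
      exact ht (Subtype.coe_le_coe.mp hxy) hz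
    · intro hx
      exact ⟨x, ⟨x, hx, rfl⟩, le_rfl⟩

lemma isAlex_pi {ι : Type*} [Finite ι] {π : ι → Type*} [∀ i, TopologicalSpace (π i)]
    [∀ i, Preorder (π i)] (h : ∀ i, IsAlex (π i)) : IsAlex (∀ i, π i) := by
  intro s
  constructor
  · intro hs f g hgf hf
    obtain ⟨I, u, hu, hsub⟩ := isOpen_pi_iff.mp hs f hf
    exact hsub fun i hi => (h i (u i)).mp (hu i hi).1 (hgf i) (hu i hi).2
  · intro hs
    have hrep : s = ⋃ f ∈ s, Set.pi Set.univ fun i => Iic (f i) := by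
      ext g
      simp only [Set.mem_iUnion, exists_prop, Set.mem_pi, Set.mem_univ, forall_true_left,
        Set.mem_Iic]
      exact ⟨fun hg => ⟨g, hg, fun i => le_rfl⟩, fun ⟨f, hf, hle⟩ => hs (fun i => hle i) hf⟩
    rw [hrep]
    exact isOpen_biUnion fun f _ =>
      isOpen_set_pi Set.finite_univ fun i _ => (h i _).mpr (isLowerSet_Iic _)

lemma monotone_of_continuous_alex {X Y : Type*} [TopologicalSpace X] [TopologicalSpace Y]
    [Preorder X] [Preorder Y] (hX : IsAlex X) (hY : IsAlex Y) {f : X → Y}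
    (hf : Continuous f) : Monotone f := by
  intro a b hab
  have h1 : IsOpen (f ⁻¹' Iic (f b)) := ((hY _).mpr (isLowerSet_Iic _)).preimage hf
  exact (hX _).mp h1 hab (Set.mem_preimage.mpr (Set.mem_Iic.mpr le_rfl))

lemma continuous_of_monotone_alex {X Y : Type*} [TopologicalSpace X] [TopologicalSpace Y]
    [Preorder X] [Preorder Y] (hX : IsAlex X) (hY : IsAlex Y) {f : X → Y}
    (hf : Monotone f) : Continuous f := by
  rw [continuous_def]
  intro u hu
  exact (hX _).mpr (((hY u).mp hu).preimage hf)

/-- In an Alexandrov space, two points of a preconnected set are linked by a fence. -/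
lemma rtg_of_mem_preconnected {X : Type*} [TopologicalSpace X] [Preorder X] (hX : IsAlex X)
    {S : Set X} (hS : IsPreconnected S) {a b : X} (ha : a ∈ S) (hb : b ∈ S) :
    Relation.ReflTransGen (fun x y => y ∈ S ∧ (x ≤ y ∨ y ≤ x)) a b := by
  by_contra hnb
  set r := fun x y : X => y ∈ S ∧ (x ≤ y ∨ y ≤ x) with hr
  set T := {y ∈ S | Relation.ReflTransGen r a y} with hT
  have hu : IsOpen (⋃ y ∈ T, Iic y) := isOpen_biUnion fun y _ => (hX _).mpr (isLowerSet_Iic _)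
  have hv : IsOpen (⋃ y ∈ S \ T, Iic y) :=
    isOpen_biUnion fun y _ => (hX _).mpr (isLowerSet_Iic _)
  have haT : a ∈ T := ⟨ha, Relation.ReflTransGen.refl⟩
  have hbT : b ∈ S \ T := ⟨hb, fun h => hnb h.2⟩
  have hsub : S ⊆ (⋃ y ∈ T, Iic y) ∪ ⋃ y ∈ S \ T, Iic y := by
    intro y hy
    by_cases hyT : y ∈ T
    · exact Or.inl (Set.mem_biUnion hyT le_rfl)
    · exact Or.inr (Set.mem_biUnion ⟨hy, hyT⟩ le_rfl)
  obtain ⟨z, hzS, hzu, hzv⟩ := hS _ _ hu hv hsub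
    ⟨a, ha, Set.mem_biUnion haT le_rfl⟩ ⟨b, hb, Set.mem_biUnion hbT le_rfl⟩
  obtain ⟨y₁, hy₁T, hzy₁⟩ := Set.mem_iUnion₂.mp hzu
  obtain ⟨y₂, hy₂ST, hzy₂⟩ := Set.mem_iUnion₂.mp hzv
  have h1 : Relation.ReflTransGen r a z := hy₁T.2.tail ⟨hzS, Or.inr hzy₁⟩
  have h2 : Relation.ReflTransGen r a y₂ := h1.tail ⟨hy₂ST.1, Or.inl hzy₂⟩
  exact hy₂ST.2 ⟨hy₂ST.1, h2⟩

lemma chain_of_rtg {V : Type*} {r : V → V → Prop} {a b : V}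
    (h : Relation.ReflTransGen r a b) :
    ∃ (k : ℕ) (c : ℕ → V), c 0 = a ∧ (∀ j, k ≤ j → c j = b) ∧
      ∀ j, c j = c (j + 1) ∨ r (c j) (c (j + 1)) := by
  induction h with
  | refl => exact ⟨0, fun _ => a, rfl, fun _ _ => rfl, fun _ => Or.inl rfl⟩
  | @tail p q h' hpq ih =>
    obtain ⟨k, c, h0, hk, hs⟩ := ih
    refine ⟨k + 1, fun j => if j ≤ k then c j else q, by simp [h0], ?_, ?_⟩
    · intro j hj
      have : ¬ j ≤ k := by omega
      simp [this]
    · intro j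
      rcases lt_trichotomy j k with hjk | hjk | hjk
      · have h1 : j ≤ k := le_of_lt hjk
        have h2 : j + 1 ≤ k := hjk
        simpa [h1, h2] using hs j
      · subst hjk
        have h2 : ¬ j + 1 ≤ j := by omega
        simp only [le_refl, if_pos, h2, if_neg, if_false, ite_true]
        right
        rw [hk j le_rfl]
        exact hpq
      · have h1 : ¬ j ≤ k := by omega
        have h2 : ¬ j + 1 ≤ k := by omega
        simp [h1, h2]

/-- Turn a fence of comparable elements into one alternating as in `J`. -/
noncomputable def fenceify {V : Type*} [Preorder V] (d : ℕ → V) (j : ℕ) : V :=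
  if j % 2 = 0 then d (j / 2)
  else
    haveI := Classical.propDecidable (d (j / 2) ≤ d (j / 2 + 1))
    if d (j / 2) ≤ d (j / 2 + 1) then d (j / 2 + 1) else d (j / 2)

lemma fenceify_exists {V : Type*} [Preorder V] (d : ℕ → V) (j : ℕ) :
    ∃ q, fenceify d j = d q := by
  unfold fenceify
  split_ifs <;> exact ⟨_, rfl⟩

lemma fenceify_even {V : Type*} [Preorder V] (d : ℕ → V) (q : ℕ) :
    fenceify d (2 * q) = d q := by
  have h1 : (2 * q) % 2 = 0 := by omega
  have h2 : (2 * q) / 2 = q := by omega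
  simp [fenceify, h1, h2]

lemma fenceify_le_odd {V : Type*} [Preorder V] {d : ℕ → V}
    (hc : ∀ j, d j ≤ d (j + 1) ∨ d (j + 1) ≤ d j) (q : ℕ) :
    fenceify d (2 * q) ≤ fenceify d (2 * q + 1) ∧
      fenceify d (2 * q + 2) ≤ fenceify d (2 * q + 1) := by
  have h1 : ¬ (2 * q + 1) % 2 = 0 := by omega
  have h2 : (2 * q + 1) / 2 = q := by omega
  have h3 : 2 * q + 2 = 2 * (q + 1) := by ring
  rw [fenceify_even, h3, fenceify_even]
  unfold fenceify
  rw [if_neg h1, h2]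
  haveI := Classical.propDecidable (d q ≤ d (q + 1))
  by_cases h : d q ≤ d (q + 1)
  · rw [if_pos h]; exact ⟨h, le_rfl⟩
  · rw [if_neg h]; exact ⟨le_rfl, (hc q).resolve_left h⟩

end AuxForCC

/-- For a path connected finite space `P`, `CC(P) ≤ cat*_P(P × P)`. -/
theorem CC_le_catStar
    (P : Type) [PartialOrder P] [Finite P] [TopologicalSpace P] [PathConnectedSpace P]
    (hP : ∀ s : Set P, IsOpen s ↔ IsLowerSet s) :
    CC P ≤ catStar P := by
  classical
  have hPP : IsAlex (P × P) := isAlex_prod hP hP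
  have main : ∀ n, hasCatStarCover P n → ∃ m, hasCCCover P m n := by
    intro n hc
    obtain ⟨U, hUopen, hUcov, hUH⟩ := hc
    choose H hH0 hH1 hH2 using hUH
    have key : ∀ i, ∃ (k : ℕ) (d : ℕ → (↥(U i) → P)),
        (∀ j, Monotone (d j)) ∧ (∀ j, d j ≤ d (j + 1) ∨ d (j + 1) ≤ d j) ∧
        (∀ x : ↥(U i), d 0 x = (x : P × P).1) ∧
        (∀ j, k ≤ j → ∀ x : ↥(U i), d j x = (x : P × P).2) := by
      intro i
      have hAU : IsAlex ↥(U i) := isAlex_subtype hPP (U i)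
      have hPi : IsAlex (↥(U i) → P × P) := isAlex_pi fun _ => hPP
      set Φ : unitInterval → (↥(U i) → P × P) := fun t x => H i (x, t) with hΦdef
      have hΦ : Continuous Φ := continuous_pi fun x =>
        (H i).continuous.comp (continuous_const.prodMk continuous_id)
      have hScon : IsPreconnected (Set.range Φ) := isPreconnected_range hΦ
      have hmem0 : Φ 0 ∈ Set.range Φ := Set.mem_range_self 0
      have hmem1 : Φ 1 ∈ Set.range Φ := Set.mem_range_self 1
      have hrtg := rtg_of_mem_preconnected hPi hScon hmem0 hmem1
      obtain ⟨k, c, hc0, hck, hcs⟩ := chain_of_rtg hrtg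
      have hcmem : ∀ j, c j ∈ Set.range Φ := by
        intro j
        induction j with
        | zero => rw [hc0]; exact hmem0
        | succ j ih =>
          rcases hcs j with h | h
          · rw [← h]; exact ih
          · exact h.1
      have hcmono : ∀ j, Monotone (c j) := by
        intro j
        obtain ⟨t, ht⟩ := hcmem j
        rw [← ht]
        have hcont : Continuous (Φ t) :=
          (H i).continuous.comp (continuous_id.prodMk continuous_const)
        exact monotone_of_continuous_alex hAU hPP hcont
      refine ⟨k, fun j x => (c j x).1, ?_, ?_, ?_, ?_⟩
      · intro j a b hab
        exact (hcmono j hab).1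
      · intro j
        rcases hcs j with h | h
        · exact Or.inl fun x => by show (c j x).1 ≤ (c (j+1) x).1; rw [h]
        · rcases h.2 with h' | h'
          · exact Or.inl fun x => (h' x).1
          · exact Or.inr fun x => (h' x).1
      · intro x
        show (c 0 x).1 = (x : P × P).1
        have hcx : c 0 x = H i (x, 0) := by rw [hc0]
        rw [hcx, hH0 i x]
      · intro j hj x
        show (c j x).1 = (x : P × P).2
        have hcx : c j x = H i (x, 1) := by rw [hck j hj]
        rw [hcx, hH1 i x, hH2 i x 1]
    choose k d hdm hdc hd0 hdk using key
    set M := Finset.univ.sup k with hM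
    refine ⟨2 * M, U, hUopen, hUcov, ?_⟩
    intro i
    have hem : ∀ j, Monotone (fenceify (d i) j) := by
      intro j
      obtain ⟨q, hq⟩ := fenceify_exists (d i) j
      rw [hq]
      exact hdm i q
    set F : ↥(U i) × J (2 * M) → P := fun z => fenceify (d i) (J.val z.2) z.1 with hF
    have hFmono : Monotone F := by
      intro z w hzw
      obtain ⟨hxy, hj⟩ := hzw
      have hj' : (J.val z.2 = J.val w.2 ∨
          (J.val w.2 % 2 = 1 ∧ (J.val w.2 = J.val z.2 + 1 ∨ J.val z.2 = J.val w.2 + 1))) := hj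
      show fenceify (d i) (J.val z.2) z.1 ≤ fenceify (d i) (J.val w.2) w.1
      rcases hj' with heq | ⟨hodd, hcase | hcase⟩
      · rw [heq]; exact hem _ hxy
      · obtain ⟨q, hq⟩ : ∃ q, J.val z.2 = 2 * q := ⟨J.val z.2 / 2, by omega⟩
        have hy' : J.val w.2 = 2 * q + 1 := by omega
        rw [hq, hy']
        exact le_trans (hem (2 * q) hxy) ((fenceify_le_odd (hdc i) q).1 w.1)
      · obtain ⟨q, hq⟩ : ∃ q, J.val w.2 = 2 * q + 1 := ⟨J.val w.2 / 2, by omega⟩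
        have hx' : J.val z.2 = 2 * q + 2 := by omega
        rw [hq, hx']
        exact le_trans (hem (2 * q + 2) hxy) ((fenceify_le_odd (hdc i) q).2 w.1)
    have hFc : Continuous F := continuous_of_monotone_alex
      (isAlex_prod (isAlex_subtype hPP (U i)) (isAlex_J (2 * M))) hP hFmono
    refine ⟨ContinuousMap.curry ⟨F, hFc⟩, ?_⟩
    intro x
    have hzero : J.val (J.zero : J (2 * M)) = 0 := Fin.val_zero _
    have hlast : J.val (J.last : J (2 * M)) = 2 * M := rfl
    constructor
    · show F (x, J.zero) = (x : P × P).1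
      rw [hF]
      simp only
      rw [hzero]
      have h20 : (0 : ℕ) = 2 * 0 := by ring
      rw [h20, fenceify_even]
      exact hd0 i x
    · show F (x, J.last) = (x : P × P).2
      rw [hF]
      simp only
      rw [hlast, fenceify_even]
      exact hdk i M (Finset.le_sup (Finset.mem_univ i)) x
  unfold catStar
  refine le_sInf ?_
  rintro y ⟨n, hn, rfl⟩
  obtain ⟨m, hm⟩ := main n hn
  calc CC P ≤ CCm P m := iInf_le _ m
    _ ≤ (n : ℕ∞) := by
        unfold CCm
        exact sInf_le ⟨n, hm, rfl⟩
end

section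
/- A path connected finite T₀ space P is contractible if and only if CC(P) = 1. -/
open Set

section AuxCC

open Set

/-- A continuous map into a space where lower sets are open, from a space where open
sets are lower, is monotone. -/
lemma auxCC_mono_of_cont {X Y : Type*} [Preorder X] [Preorder Y]
    [TopologicalSpace X] [TopologicalSpace Y]
    (hX : ∀ s : Set X, IsOpen s → IsLowerSet s)
    (hY : ∀ s : Set Y, IsLowerSet s → IsOpen s)
    {f : X → Y} (hf : Continuous f) : Monotone f := by
  intro a b hab
  have h1 : IsOpen (f ⁻¹' Set.Iic (f b)) := (hY _ (isLowerSet_Iic _)).preimage hf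
  exact hX _ h1 hab (le_refl (f b))

lemma auxCC_cont_of_mono {X Y : Type*} [Preorder X] [Preorder Y]
    [TopologicalSpace X] [TopologicalSpace Y]
    (hX : ∀ s : Set X, IsLowerSet s → IsOpen s)
    (hY : ∀ s : Set Y, IsOpen s → IsLowerSet s)
    {f : X → Y} (hf : Monotone f) : Continuous f := by
  rw [continuous_def]
  intro U hU
  exact hX _ ((hY _ hU).preimage hf)

lemma auxCC_prod_lower_open {X Y : Type*} [Preorder X] [Preorder Y]
    [TopologicalSpace X] [TopologicalSpace Y]
    (hX : ∀ s : Set X, IsLowerSet s → IsOpen s)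
    (hY : ∀ s : Set Y, IsLowerSet s → IsOpen s)
    (s : Set (X × Y)) (hs : IsLowerSet s) : IsOpen s := by
  have hrw : s = ⋃ p : s, Set.Iic (p : X × Y).1 ×ˢ Set.Iic (p : X × Y).2 := by
    ext q
    simp only [Set.mem_iUnion, Set.mem_prod, Set.mem_Iic]
    constructor
    · intro hq; exact ⟨⟨q, hq⟩, le_refl _, le_refl _⟩
    · rintro ⟨p, h1, h2⟩
      exact hs (show q ≤ (p : X × Y) from Prod.le_def.2 ⟨h1, h2⟩) p.2
  rw [hrw]
  exact isOpen_iUnion fun p => (hX _ (isLowerSet_Iic _)).prod (hY _ (isLowerSet_Iic _))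

/-- In `J m`, lower sets are open (definitionally, the topology is `alexTop`). -/
lemma auxCC_J_lower_open (m : ℕ) : ∀ s : Set (J m), IsLowerSet s → IsOpen s :=
  fun _ h => h

lemma auxCC_J_open_lower (m : ℕ) : ∀ s : Set (J m), IsOpen s → IsLowerSet s :=
  fun _ h => h

/-- The order on `J m`, unfolded. -/
lemma auxCC_J_le_def {m : ℕ} (a b : J m) :
    a ≤ b ↔ (J.val a = J.val b ∨ (J.val b % 2 = 1 ∧
      (J.val b = J.val a + 1 ∨ J.val a = J.val b + 1))) := Iff.rfl

lemma auxCC_J_val_lt {m : ℕ} (a : J m) : J.val a ≤ m :=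
  Nat.lt_succ_iff.mp (@Fin.isLt (m + 1) a)

/-- Two maps with `f ≤ g` pointwise into a space where lower sets are open are homotopic. -/
lemma auxCC_homotopic_of_le {X P : Type*} [TopologicalSpace X] [Preorder P]
    [TopologicalSpace P]
    (hP : ∀ s : Set P, IsOpen s ↔ IsLowerSet s)
    (f g : C(X, P)) (hfg : ∀ x, f x ≤ g x) : f.Homotopic g := by
  classical
  have hcont : Continuous (fun q : unitInterval × X =>
      if q.1 = 1 then g q.2 else f q.2) := by
    rw [continuous_def]
    intro V hV
    have hVl : IsLowerSet V := (hP V).mp hV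
    have hrw : (fun q : unitInterval × X => if q.1 = 1 then g q.2 else f q.2) ⁻¹' V
        = ({t : unitInterval | (t : ℝ) < 1} ×ˢ (f ⁻¹' V))
          ∪ (univ ×ˢ (f ⁻¹' V ∩ g ⁻¹' V)) := by
      ext ⟨t, x⟩
      simp only [Set.mem_preimage, Set.mem_union, Set.mem_prod, Set.mem_setOf_eq,
        Set.mem_inter_iff, Set.mem_univ, true_and]
      constructor
      · intro h
        by_cases ht : t = 1
        · rw [if_pos ht] at h
          exact Or.inr ⟨hVl (hfg x) h, h⟩
        · rw [if_neg ht] at h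
          refine Or.inl ⟨?_, h⟩
          rcases lt_or_eq_of_le t.2.2 with h1 | h1
          · exact h1
          · exact absurd (Subtype.ext h1) ht
      · rintro (⟨ht, hf⟩ | ⟨hf, hg⟩)
        · rw [if_neg (fun h => by rw [h] at ht; exact lt_irrefl _ ht)]
          exact hf
        · by_cases ht : t = 1
          · rw [if_pos ht]; exact hg
          · rw [if_neg ht]; exact hf
    rw [hrw]
    refine IsOpen.union (IsOpen.prod ?_ (hV.preimage f.continuous)) ?_
    · exact isOpen_Iio.preimage continuous_subtype_val
    · exact isOpen_univ.prod ((hV.preimage f.continuous).inter (hV.preimage g.continuous))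
  refine ⟨{ toFun := fun q => if q.1 = 1 then g q.2 else f q.2
            continuous_toFun := hcont
            map_zero_left := ?_
            map_one_left := ?_ }⟩
  · intro x
    have h01 : (0 : unitInterval) ≠ 1 := fun h => by
      have := congrArg (Subtype.val) h
      norm_num at this
    simp only [if_neg h01]
  · intro x
    simp

end AuxCC

section AuxZig

open Set

variable {P : Type} [PartialOrder P] [TopologicalSpace P]

/-- The fence of points in `P` from `x` to `y` through the contraction `F`. -/
def auxCC_g (F : ℕ → C(P, P)) (k : ℕ) (x y : P) (i : ℕ) : P :=
  if i ≤ k then F i x else F (2 * k - i) y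

open Classical in
/-- The zigzag version of `auxCC_g`, monotone along the fence `J (4*k)`. -/
noncomputable def auxCC_zig (F : ℕ → C(P, P)) (k : ℕ) (x y : P) (n : ℕ) : P :=
  if n % 2 = 0 then auxCC_g F k x y (n / 2)
  else if (∀ z w : P, auxCC_g F k z w (n / 2) ≤ auxCC_g F k z w (n / 2 + 1))
    then auxCC_g F k x y (n / 2 + 1) else auxCC_g F k x y (n / 2)

lemma auxCC_zig_even (F : ℕ → C(P, P)) (k : ℕ) (x y : P) {n : ℕ} (h : n % 2 = 0) :
    auxCC_zig F k x y n = auxCC_g F k x y (n / 2) := by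
  rw [auxCC_zig, if_pos h]

open Classical in
lemma auxCC_zig_odd (F : ℕ → C(P, P)) (k : ℕ) (x y : P) {n : ℕ} (h : n % 2 = 1) :
    auxCC_zig F k x y n =
      if (∀ z w : P, auxCC_g F k z w (n / 2) ≤ auxCC_g F k z w (n / 2 + 1))
      then auxCC_g F k x y (n / 2 + 1) else auxCC_g F k x y (n / 2) := by
  rw [auxCC_zig, if_neg (by omega)]

section Fence

variable {k : ℕ} {F : ℕ → C(P, P)} {x₀ : P}

/-- Uniform comparability of consecutive fence values. -/
lemma auxCC_g_updown (hk : 1 ≤ k)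
    (hFk : F k = ContinuousMap.const P x₀)
    (hrel : ∀ i < k, (∀ z, F i z ≤ F (i + 1) z) ∨ (∀ z, F (i + 1) z ≤ F i z))
    {i : ℕ} (hi : i < 2 * k) :
    (∀ z w : P, auxCC_g F k z w i ≤ auxCC_g F k z w (i + 1)) ∨
    (∀ z w : P, auxCC_g F k z w (i + 1) ≤ auxCC_g F k z w i) := by
  by_cases hik : i < k
  · rcases hrel i hik with h | h
    · left; intro z w
      rw [auxCC_g, auxCC_g, if_pos (by omega : i ≤ k), if_pos (by omega : i + 1 ≤ k)]
      exact h z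
    · right; intro z w
      rw [auxCC_g, auxCC_g, if_pos (by omega : i ≤ k), if_pos (by omega : i + 1 ≤ k)]
      exact h z
  · -- k ≤ i < 2k
    have e1 : ∀ z w : P, auxCC_g F k z w i = F (2 * k - i) w := by
      intro z w
      by_cases h : i ≤ k
      · have hik' : i = k := by omega
        rw [auxCC_g, if_pos h, hik', (by omega : 2 * k - k = k), hFk]
        rfl
      · rw [auxCC_g, if_neg h]
    have e2 : ∀ z w : P, auxCC_g F k z w (i + 1) = F (2 * k - i - 1) w := by
      intro z w
      rw [auxCC_g, if_neg (by omega : ¬ (i + 1 ≤ k)), (by omega : 2 * k - (i + 1) = 2 * k - i - 1)]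
    have hj : 2 * k - i - 1 < k := by omega
    have hj1 : 2 * k - i - 1 + 1 = 2 * k - i := by omega
    rcases hrel _ hj with h | h
    · right; intro z w
      rw [e1, e2]
      have := h w
      rwa [hj1] at this
    · left; intro z w
      rw [e1, e2]
      have := h w
      rwa [hj1] at this

/-- Monotonicity of the fence values in the pair `(x, y)`. -/
lemma auxCC_g_mono (hP : ∀ s : Set P, IsOpen s ↔ IsLowerSet s) (i : ℕ) :
    Monotone (fun p : P × P => auxCC_g F k p.1 p.2 i) := by
  have monoF : ∀ j, Monotone (F j) := fun j =>
    auxCC_mono_of_cont (fun s hs => (hP s).mp hs) (fun s hs => (hP s).mpr hs)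
      (F j).continuous
  intro p q hpq
  by_cases h : i ≤ k
  · simp only [auxCC_g, if_pos h]
    exact monoF i hpq.1
  · simp only [auxCC_g, if_neg h]
    exact monoF _ hpq.2

lemma auxCC_zig_mono_pair (hP : ∀ s : Set P, IsOpen s ↔ IsLowerSet s) (n : ℕ) :
    Monotone (fun p : P × P => auxCC_zig F k p.1 p.2 n) := by
  intro p q hpq
  show auxCC_zig F k p.1 p.2 n ≤ auxCC_zig F k q.1 q.2 n
  by_cases h : n % 2 = 0
  · rw [auxCC_zig_even F k _ _ h, auxCC_zig_even F k _ _ h]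
    exact auxCC_g_mono hP _ hpq
  · rw [auxCC_zig_odd F k _ _ (by omega), auxCC_zig_odd F k _ _ (by omega)]
    by_cases hc : (∀ z w : P, auxCC_g F k z w (n / 2) ≤ auxCC_g F k z w (n / 2 + 1))
    · rw [if_pos hc, if_pos hc]; exact auxCC_g_mono hP _ hpq
    · rw [if_neg hc, if_neg hc]; exact auxCC_g_mono hP _ hpq

/-- Monotonicity of the zigzag along `J (4*k)`. -/
lemma auxCC_zig_mono_J (hk : 1 ≤ k)
    (hFk : F k = ContinuousMap.const P x₀)
    (hrel : ∀ i < k, (∀ z, F i z ≤ F (i + 1) z) ∨ (∀ z, F (i + 1) z ≤ F i z))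
    (x y : P) :
    ∀ a b : J (4 * k), a ≤ b → auxCC_zig F k x y (J.val a) ≤ auxCC_zig F k x y (J.val b) := by
  intro a b hab
  rcases (auxCC_J_le_def a b).mp hab with h | ⟨hodd, h | h⟩
  · rw [h]
  · -- b = a + 1, b odd, so a is even
    have ha : J.val a % 2 = 0 := by omega
    rw [auxCC_zig_even F k x y ha, auxCC_zig_odd F k x y (by omega : J.val b % 2 = 1)]
    have hdiv : J.val b / 2 = J.val a / 2 := by omega
    rw [hdiv]
    by_cases hc : (∀ z w : P, auxCC_g F k z w (J.val a / 2) ≤ auxCC_g F k z w (J.val a / 2 + 1))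
    · rw [if_pos hc]; exact hc x y
    · rw [if_neg hc]
  · -- a = b + 1, b odd, so a is even
    have ha : J.val a % 2 = 0 := by omega
    rw [auxCC_zig_even F k x y ha, auxCC_zig_odd F k x y (by omega : J.val b % 2 = 1)]
    have hdiv : J.val a / 2 = J.val b / 2 + 1 := by omega
    rw [hdiv]
    by_cases hc : (∀ z w : P, auxCC_g F k z w (J.val b / 2) ≤ auxCC_g F k z w (J.val b / 2 + 1))
    · rw [if_pos hc]
    · rw [if_neg hc]
      have hlt : J.val b < 4 * k + 1 := @Fin.isLt (4 * k + 1) b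
      have hi : J.val b / 2 < 2 * k := by omega
      rcases auxCC_g_updown hk hFk hrel hi with h' | h'
      · exact absurd h' hc
      · exact h' x y

end Fence

end AuxZig

section AuxMain

open Set

variable {P : Type} [PartialOrder P] [TopologicalSpace P]

/-- From a fence of continuous self-maps connecting the identity to a constant,
build a `CC`-cover of size 1. -/
lemma auxCC_hasCover_of_fence (hP : ∀ s : Set P, IsOpen s ↔ IsLowerSet s)
    {k : ℕ} (hk : 1 ≤ k) (F : ℕ → C(P, P)) (x₀ : P)
    (hF0 : F 0 = ContinuousMap.id P) (hFk : F k = ContinuousMap.const P x₀)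
    (hrel : ∀ i < k, (∀ z, F i z ≤ F (i + 1) z) ∨ (∀ z, F (i + 1) z ≤ F i z)) :
    hasCCCover P (4 * k) 1 := by
  have hPl : ∀ s : Set P, IsLowerSet s → IsOpen s := fun s hs => (hP s).mpr hs
  -- the big map is monotone, hence continuous
  have hmono : Monotone (fun q : (P × P) × J (4 * k) => auxCC_zig F k q.1.1 q.1.2 (J.val q.2)) := by
    rintro ⟨p, a⟩ ⟨q, b⟩ ⟨hpq, hab⟩
    calc auxCC_zig F k p.1 p.2 (J.val a)
        ≤ auxCC_zig F k q.1 q.2 (J.val a) := auxCC_zig_mono_pair hP _ hpq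
      _ ≤ auxCC_zig F k q.1 q.2 (J.val b) := auxCC_zig_mono_J hk hFk hrel q.1 q.2 a b hab
  have hcont : Continuous (fun q : (P × P) × J (4 * k) => auxCC_zig F k q.1.1 q.1.2 (J.val q.2)) :=
    auxCC_cont_of_mono
      (auxCC_prod_lower_open (auxCC_prod_lower_open hPl hPl) (auxCC_J_lower_open _))
      (fun s hs => (hP s).mp hs) hmono
  have hzig0 : ∀ x y : P, auxCC_zig F k x y 0 = x := by
    intro x y
    rw [auxCC_zig_even F k x y (by omega), (by omega : 0 / 2 = 0), auxCC_g,
      if_pos (Nat.zero_le k), hF0]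
    rfl
  have hzig4k : ∀ x y : P, auxCC_zig F k x y (4 * k) = y := by
    intro x y
    rw [auxCC_zig_even F k x y (by omega), (by omega : 4 * k / 2 = 2 * k), auxCC_g,
      if_neg (by omega : ¬ (2 * k ≤ k)), (by omega : 2 * k - 2 * k = 0), hF0]
    rfl
  refine ⟨fun _ => univ, fun _ => isOpen_univ, ?_, ?_⟩
  · exact Set.iUnion_const _
  · intro i
    refine ⟨(ContinuousMap.curry ⟨_, hcont⟩).comp ⟨Subtype.val, continuous_subtype_val⟩, ?_⟩
    intro x
    constructor
    · show auxCC_zig F k (x : P × P).1 (x : P × P).2 (J.val (J.zero : J (4 * k))) = (x : P × P).1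
      have h0 : J.val (J.zero : J (4 * k)) = 0 := Fin.val_zero _
      rw [h0, hzig0]
    · show auxCC_zig F k (x : P × P).1 (x : P × P).2 (J.val (J.last : J (4 * k))) = (x : P × P).2
      have h0 : J.val (J.last : J (4 * k)) = 4 * k := rfl
      rw [h0, hzig4k]

/-- From contractibility, extract a fence of continuous self-maps. -/
lemma auxCC_fence_of_contractible [Finite P]
    (hP : ∀ s : Set P, IsOpen s ↔ IsLowerSet s) (hc : ContractibleSpace P) :
    ∃ (k : ℕ) (F : ℕ → C(P, P)) (x₀ : P), 1 ≤ k ∧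
      F 0 = ContinuousMap.id P ∧ F k = ContinuousMap.const P x₀ ∧
      ∀ i < k, (∀ z, F i z ≤ F (i + 1) z) ∨ (∀ z, F (i + 1) z ≤ F i z) := by
  obtain ⟨x₀, hnull⟩ := (contractible_iff_id_nullhomotopic P).mp hc
  obtain ⟨H⟩ := hnull
  set rel : C(P, P) → C(P, P) → Prop :=
    fun f g => (∀ z, f z ≤ g z) ∨ (∀ z, g z ≤ f z) with hrel_def
  have relsymm : ∀ {f g}, rel f g → rel g f := by
    rintro f g (h | h)
    · exact Or.inr h
    · exact Or.inl h
  set φ : unitInterval → C(P, P) := fun t =>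
    ⟨fun x => H (t, x), H.continuous.comp (continuous_const.prodMk continuous_id)⟩ with hφ_def
  set S : Set unitInterval := {t | Relation.ReflTransGen rel (φ t) (φ 0)} with hS_def
  have nbhd : ∀ t : unitInterval, ∃ V : Set unitInterval, IsOpen V ∧ t ∈ V ∧
      ∀ s ∈ V, ∀ x : P, H (s, x) ≤ H (t, x) := by
    intro t
    refine ⟨⋂ x : P, (fun s : unitInterval => H (s, x)) ⁻¹' (Set.Iic (H (t, x))), ?_, ?_, ?_⟩
    · exact isOpen_iInter_of_finite fun x =>
        ((hP _).mpr (isLowerSet_Iic _)).preimage (H.continuous.comp (continuous_id.prodMk continuous_const))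
    · exact Set.mem_iInter.mpr fun x => le_refl _
    · intro s hs x
      exact Set.mem_iInter.mp hs x
  have Sopen : IsOpen S := by
    rw [isOpen_iff_forall_mem_open]
    intro t ht
    obtain ⟨V, hVo, htV, hV⟩ := nbhd t
    refine ⟨V, fun s hs => ?_, hVo, htV⟩
    exact Relation.ReflTransGen.head (Or.inl (hV s hs)) ht
  have Scopen : IsOpen Sᶜ := by
    rw [isOpen_iff_forall_mem_open]
    intro t ht
    obtain ⟨V, hVo, htV, hV⟩ := nbhd t
    refine ⟨V, fun s hs hsS => ht ?_, hVo, htV⟩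
    exact Relation.ReflTransGen.head (Or.inr (hV s hs)) hsS
  have hSuniv : S = univ :=
    IsClopen.eq_univ ⟨isOpen_compl_iff.mp Scopen, Sopen⟩ ⟨0, Relation.ReflTransGen.refl⟩
  have h1S : Relation.ReflTransGen rel (φ 1) (φ 0) := by
    have : (1 : unitInterval) ∈ S := hSuniv ▸ Set.mem_univ _
    exact this
  -- convert the refl-trans chain into a fence
  have conv : ∀ a b : C(P, P), Relation.ReflTransGen rel a b →
      ∃ (k : ℕ) (F : ℕ → C(P, P)), 1 ≤ k ∧ F 0 = b ∧ F k = a ∧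
        ∀ i < k, rel (F i) (F (i + 1)) := by
    intro a b h
    induction h with
    | refl =>
      refine ⟨1, fun _ => a, le_refl _, rfl, rfl, ?_⟩
      intro i _
      exact Or.inl fun z => le_refl _
    | tail hab hbc ih =>
      obtain ⟨k, F, hk, hF0, hFk, hstep⟩ := ih
      refine ⟨k + 1, fun i => if i = 0 then _ else F (i - 1), by omega, if_pos rfl, ?_, ?_⟩
      · dsimp only
        rw [if_neg (by omega)]
        simpa using hFk
      · intro i hi
        dsimp only
        rcases Nat.eq_zero_or_pos i with h0 | h0
        · subst h0
          rw [if_pos rfl, if_neg (by omega)]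
          simpa [hF0] using relsymm hbc
        · rw [if_neg (by omega), if_neg (by omega),
            (by omega : i + 1 - 1 = (i - 1) + 1)]
          exact hstep (i - 1) (by omega)
  obtain ⟨k, F, hk, hF0, hFk, hstep⟩ := conv (φ 1) (φ 0) h1S
  have hφ0 : φ 0 = ContinuousMap.id P := ContinuousMap.ext fun x => H.apply_zero x
  have hφ1 : φ 1 = ContinuousMap.const P x₀ := ContinuousMap.ext fun x => H.apply_one x
  exact ⟨k, F, x₀, hk, by rw [hF0, hφ0], by rw [hFk, hφ1], hstep⟩

/-- From a `CC`-cover of size 1, contractibility. -/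
lemma auxCC_contractible_of_cover (hP : ∀ s : Set P, IsOpen s ↔ IsLowerSet s)
    (x₀ : P) {m : ℕ} (h : hasCCCover P m 1) : ContractibleSpace P := by
  obtain ⟨U, hUopen, hUcov, hsec⟩ := h
  obtain ⟨s, hs⟩ := hsec 0
  have hmem : ∀ p : P × P, p ∈ U 0 := by
    intro p
    have hp : p ∈ ⋃ i, U i := hUcov ▸ Set.mem_univ p
    obtain ⟨i, hi⟩ := Set.mem_iUnion.mp hp
    rwa [Subsingleton.elim i 0] at hi
  set e : P → C(J m, P) := fun x => s ⟨(x, x₀), hmem _⟩ with he_def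
  have he_cont : Continuous e :=
    s.continuous.comp ((continuous_id.prodMk continuous_const).subtype_mk _)
  have hmono : ∀ x : P, ∀ a b : J m, a ≤ b → e x a ≤ e x b := fun x a b hab =>
    auxCC_mono_of_cont (auxCC_J_open_lower m) (fun s hs => (hP s).mpr hs)
      (e x).continuous hab
  -- the continuous maps along the fence
  have ccont : ∀ a : Fin (m + 1), Continuous (fun x : P => e x a) := fun a =>
    (continuous_eval_const (a : J m)).comp he_cont
  set c : Fin (m + 1) → C(P, P) := fun a => ⟨fun x => e x a, ccont a⟩ with hc_def
  have adj : ∀ j : ℕ, (hj : j < m) → ContinuousMap.Homotopic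
      (c ⟨j, by omega⟩) (c ⟨j + 1, by omega⟩) := by
    intro j hj
    have hcmp : ∀ a b : J m, J.val a = j → J.val b = j + 1 → a ≤ b ∨ b ≤ a := by
      intro a b ha hb
      by_cases hpar : (j + 1) % 2 = 1
      · left
        exact (auxCC_J_le_def a b).mpr (Or.inr ⟨by omega, Or.inl (by omega)⟩)
      · right
        exact (auxCC_J_le_def b a).mpr (Or.inr ⟨by omega, Or.inr (by omega)⟩)
    rcases hcmp ⟨j, by omega⟩ ⟨j + 1, by omega⟩ rfl rfl with hle | hle
    · exact auxCC_homotopic_of_le hP _ _ fun x => hmono x _ _ hle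
    · exact (auxCC_homotopic_of_le hP _ _ fun x => hmono x _ _ hle).symm
  have chain : ∀ d j : ℕ, (h : j + d = m) → ContinuousMap.Homotopic
      (c ⟨j, by omega⟩) (c ⟨m, by omega⟩) := by
    intro d
    induction d with
    | zero =>
      intro j hj
      have : (⟨j, by omega⟩ : Fin (m + 1)) = ⟨m, by omega⟩ := by
        apply Fin.ext; simpa using hj
      rw [this]
    | succ d ih =>
      intro j hj
      exact (adj j (by omega)).trans (ih (j + 1) (by omega))
  have hmain := chain m 0 (by omega)
  have hc0 : c ⟨0, by omega⟩ = ContinuousMap.id P := by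
    apply ContinuousMap.ext
    intro x
    have hz : ((⟨0, by omega⟩ : Fin (m + 1)) : J m) = J.zero := by
      apply Fin.ext; simp [J.zero]
    show e x (⟨0, by omega⟩ : Fin (m + 1)) = x
    rw [hz]
    exact (hs ⟨(x, x₀), hmem _⟩).1
  have hcm : c ⟨m, by omega⟩ = ContinuousMap.const P x₀ := by
    apply ContinuousMap.ext
    intro x
    have hz : ((⟨m, by omega⟩ : Fin (m + 1)) : J m) = J.last := rfl
    show e x (⟨m, by omega⟩ : Fin (m + 1)) = x₀
    rw [hz]
    exact (hs ⟨(x, x₀), hmem _⟩).2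
  rw [hc0, hcm] at hmain
  exact (contractible_iff_id_nullhomotopic P).mpr ⟨x₀, hmain⟩

end AuxMain

/-- A path connected finite space `P` is contractible iff `CC(P) = 1`. -/
theorem contractible_iff_CC_eq_one
    (P : Type) [PartialOrder P] [Finite P] [TopologicalSpace P] [PathConnectedSpace P]
    (hP : ∀ s : Set P, IsOpen s ↔ IsLowerSet s) :
    ContractibleSpace P ↔ CC P = 1 := by
  have hne : Nonempty P := inferInstance
  have h0 : ∀ m : ℕ, ¬ hasCCCover P m 0 := by
    rintro m ⟨U, _, hcov, _⟩
    have : (⋃ i : Fin 0, U i) = (∅ : Set (P × P)) := Set.iUnion_of_empty U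
    rw [this] at hcov
    obtain ⟨x⟩ := hne
    exact absurd (hcov ▸ Set.mem_univ ((x, x) : P × P)) (Set.notMem_empty _)
  constructor
  · intro hc
    obtain ⟨k, F, x₀, hk, hF0, hFk, hstep⟩ := auxCC_fence_of_contractible hP hc
    have hcov := auxCC_hasCover_of_fence hP hk F x₀ hF0 hFk hstep
    apply le_antisymm
    · calc CC P ≤ CCm P (4 * k) := iInf_le _ _
        _ ≤ 1 := sInf_le ⟨1, hcov, Nat.cast_one⟩
    · refine le_iInf fun m => le_sInf ?_
      rintro b ⟨n, hn, rfl⟩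
      have : n ≠ 0 := fun h => h0 m (h ▸ hn)
      exact_mod_cast Nat.one_le_iff_ne_zero.mpr this
  · intro hcc
    have hlt : CC P < 2 := by rw [hcc]; norm_num
    rw [CC] at hlt
    obtain ⟨m, hm⟩ := iInf_lt_iff.mp hlt
    rw [CCm] at hm
    obtain ⟨b, hb, hb2⟩ := sInf_lt_iff.mp hm
    obtain ⟨n, hn, rfl⟩ := hb
    have hn2 : n < 2 := by exact_mod_cast hb2
    obtain ⟨x₀⟩ := hne
    interval_cases n
    · exact absurd hn (h0 m)
    · exact auxCC_contractible_of_cover hP x₀ hn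
end
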